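/- arXiv:math/0411438 — 9 statements merged into one kernel-verified Lean document; each statement's English description precedes it below -/
import Mathlib

section
/- Let q₀ : ℝ → ℝ be a measurable probability density with q₀(x) > 0 for every x, and let r₀ : ℝ → ℝ be measurable with ∫ r₀(x)²/q₀(x) dx < ∞. Let G be a probability measure on ℝ and define q(x) = ∫ q₀(x − y) dG(y) and r(x) = ∫ r₀(x − y) dG(y) (the latter interpreted as 0 at points x where the integral is not absolutely convergent). Then q(x) > 0 for every x and ∫ r(x)²/q(x) dx ≤ ∫ r₀(x)²/q₀(x) dx. (This is the content of Theorem 3.1: the Fisher information of a model whose densities are mixtures/convolutions of a base model's densities is dominated by the Fisher information of the base model, applied with r₀ an arbitrary linear combination u·∂_σ p + v·∂_β p of the score functions.) -/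
open MeasureTheory Filter Topology
open scoped ENNReal

/-- Pointwise factorization: `‖r₀ z‖` as geometric mean of `r₀ z ^ 2 / q₀ z` and `q₀ z`. -/
lemma stmt0_aux_factor {r q : ℝ} (hq : 0 < q) :
    ENNReal.ofReal |r| =
      ENNReal.ofReal (r ^ 2 / q) ^ (1 / 2 : ℝ) * ENNReal.ofReal q ^ (1 / 2 : ℝ) := by
  have hq' : (0 : ℝ) ≤ r ^ 2 / q := div_nonneg (sq_nonneg r) hq.le
  rw [ENNReal.ofReal_rpow_of_nonneg hq' (by norm_num),
    ENNReal.ofReal_rpow_of_nonneg hq.le (by norm_num),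
    ← ENNReal.ofReal_mul (Real.rpow_nonneg hq' _),
    ← Real.mul_rpow hq' hq.le, div_mul_cancel₀ _ hq.ne']
  congr 1
  rw [← sq_abs, ← Real.rpow_natCast |r| 2, ← Real.rpow_mul (abs_nonneg r)]
  norm_num

/-- Fisher information of a convolution/mixture model is dominated by that of the base model. -/
theorem stmt_0 (q₀ r₀ : ℝ → ℝ) (hq₀m : Measurable q₀) (hq₀pos : ∀ x, 0 < q₀ x)
    (hq₀dens : ∫⁻ x, ENNReal.ofReal (q₀ x) = 1)
    (hr₀m : Measurable r₀)
    (hfin : ∫⁻ x, ENNReal.ofReal ((r₀ x) ^ 2 / q₀ x) < ⊤)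
    (G : Measure ℝ) [IsProbabilityMeasure G] :
    (∀ x : ℝ, 0 < ∫⁻ y, ENNReal.ofReal (q₀ (x - y)) ∂G) ∧
      ∫⁻ x, ENNReal.ofReal ((∫ y, r₀ (x - y) ∂G) ^ 2) /
          (∫⁻ y, ENNReal.ofReal (q₀ (x - y)) ∂G)
        ≤ ∫⁻ x, ENNReal.ofReal ((r₀ x) ^ 2 / q₀ x) := by
  have hFm : Measurable fun z => ENNReal.ofReal ((r₀ z) ^ 2 / q₀ z) :=
    ((hr₀m.pow_const 2).div hq₀m).ennreal_ofReal
  have hQm : Measurable fun z => ENNReal.ofReal (q₀ z) := hq₀m.ennreal_ofReal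
  -- positivity
  have hpos : ∀ x : ℝ, 0 < ∫⁻ y, ENNReal.ofReal (q₀ (x - y)) ∂G := by
    intro x
    have hm : Measurable fun y => ENNReal.ofReal (q₀ (x - y)) :=
      (hq₀m.comp (measurable_const.sub measurable_id)).ennreal_ofReal
    rw [lintegral_pos_iff_support hm]
    have hsupp : Function.support (fun y => ENNReal.ofReal (q₀ (x - y))) = Set.univ := by
      ext y
      simp [Function.mem_support, (ENNReal.ofReal_pos.2 (hq₀pos (x - y))).ne']
    rw [hsupp, measure_univ]
    norm_num
  refine ⟨hpos, ?_⟩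
  -- pointwise Cauchy–Schwarz bound
  have key : ∀ x : ℝ,
      ENNReal.ofReal ((∫ y, r₀ (x - y) ∂G) ^ 2) /
          (∫⁻ y, ENNReal.ofReal (q₀ (x - y)) ∂G)
        ≤ ∫⁻ y, ENNReal.ofReal ((r₀ (x - y)) ^ 2 / q₀ (x - y)) ∂G := by
    intro x
    apply ENNReal.div_le_of_le_mul
    set φ : ℝ → ℝ≥0∞ := fun y => ENNReal.ofReal ((r₀ (x - y)) ^ 2 / q₀ (x - y)) ^ (1 / 2 : ℝ)
      with hφdef
    set ψ : ℝ → ℝ≥0∞ := fun y => ENNReal.ofReal (q₀ (x - y)) ^ (1 / 2 : ℝ) with hψdef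
    have hφm : Measurable φ := by
      apply Measurable.pow_const
      exact hFm.comp (measurable_const.sub measurable_id)
    have hψm : Measurable ψ := by
      apply Measurable.pow_const
      exact hQm.comp (measurable_const.sub measurable_id)
    have h1 : ENNReal.ofReal ((∫ y, r₀ (x - y) ∂G) ^ 2)
        = ENNReal.ofReal |∫ y, r₀ (x - y) ∂G| ^ 2 := by
      rw [← ENNReal.ofReal_pow (abs_nonneg _), sq_abs]
    have h2 : ENNReal.ofReal |∫ y, r₀ (x - y) ∂G| ≤ ∫⁻ y, φ y * ψ y ∂G := by
      calc ENNReal.ofReal |∫ y, r₀ (x - y) ∂G|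
          = (‖∫ y, r₀ (x - y) ∂G‖₊ : ℝ≥0∞) := by
            rw [← ENNReal.ofReal_coe_nnreal, coe_nnnorm, Real.norm_eq_abs]
        _ ≤ ∫⁻ y, (‖r₀ (x - y)‖₊ : ℝ≥0∞) ∂G := enorm_integral_le_lintegral_enorm _
        _ = ∫⁻ y, φ y * ψ y ∂G := by
            refine lintegral_congr fun y => ?_
            rw [← ENNReal.ofReal_coe_nnreal, coe_nnnorm, Real.norm_eq_abs]
            exact stmt0_aux_factor (hq₀pos (x - y))
    have hCS : ∫⁻ y, φ y * ψ y ∂G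
        ≤ (∫⁻ y, φ y ^ (2 : ℝ) ∂G) ^ (1 / 2 : ℝ) * (∫⁻ y, ψ y ^ (2 : ℝ) ∂G) ^ (1 / 2 : ℝ) :=
      ENNReal.lintegral_mul_le_Lp_mul_Lq G Real.HolderConjugate.two_two
        hφm.aemeasurable hψm.aemeasurable
    have hφ2 : ∀ y, φ y ^ (2 : ℝ) = ENNReal.ofReal ((r₀ (x - y)) ^ 2 / q₀ (x - y)) := by
      intro y
      simp only [hφdef]
      rw [← ENNReal.rpow_mul]
      norm_num
    have hψ2 : ∀ y, ψ y ^ (2 : ℝ) = ENNReal.ofReal (q₀ (x - y)) := by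
      intro y
      simp only [hψdef]
      rw [← ENNReal.rpow_mul]
      norm_num
    calc ENNReal.ofReal ((∫ y, r₀ (x - y) ∂G) ^ 2)
        = ENNReal.ofReal |∫ y, r₀ (x - y) ∂G| ^ 2 := h1
      _ ≤ (∫⁻ y, φ y * ψ y ∂G) ^ 2 := pow_le_pow_left₀ (zero_le) h2 2
      _ ≤ ((∫⁻ y, φ y ^ (2 : ℝ) ∂G) ^ (1 / 2 : ℝ)
            * (∫⁻ y, ψ y ^ (2 : ℝ) ∂G) ^ (1 / 2 : ℝ)) ^ 2 :=
          pow_le_pow_left₀ (zero_le) hCS 2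
      _ = (∫⁻ y, φ y ^ (2 : ℝ) ∂G) * (∫⁻ y, ψ y ^ (2 : ℝ) ∂G) := by
          rw [mul_pow, ← ENNReal.rpow_natCast (_ ^ (1/2 : ℝ)) 2,
            ← ENNReal.rpow_natCast (_ ^ (1/2 : ℝ)) 2, ← ENNReal.rpow_mul, ← ENNReal.rpow_mul]
          norm_num
      _ = (∫⁻ y, ENNReal.ofReal ((r₀ (x - y)) ^ 2 / q₀ (x - y)) ∂G)
            * (∫⁻ y, ENNReal.ofReal (q₀ (x - y)) ∂G) := by
          rw [lintegral_congr hφ2, lintegral_congr hψ2]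
  -- integrate the pointwise bound and apply Fubini + translation invariance
  calc ∫⁻ x, ENNReal.ofReal ((∫ y, r₀ (x - y) ∂G) ^ 2) /
          (∫⁻ y, ENNReal.ofReal (q₀ (x - y)) ∂G)
      ≤ ∫⁻ x, ∫⁻ y, ENNReal.ofReal ((r₀ (x - y)) ^ 2 / q₀ (x - y)) ∂G := lintegral_mono key
    _ = ∫⁻ y, ∫⁻ x, ENNReal.ofReal ((r₀ (x - y)) ^ 2 / q₀ (x - y)) ∂(volume : Measure ℝ) ∂G := by
        apply lintegral_lintegral_swap
        exact (hFm.comp (measurable_fst.sub measurable_snd)).aemeasurable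
    _ = ∫⁻ y, (∫⁻ x, ENNReal.ofReal ((r₀ x) ^ 2 / q₀ x)) ∂G := by
        refine lintegral_congr fun y => ?_
        exact (measurePreserving_sub_right volume y).lintegral_comp hFm
    _ = ∫⁻ x, ENNReal.ofReal ((r₀ x) ^ 2 / q₀ x) := by
        rw [lintegral_const, measure_univ, mul_one]
end

section
/- Let F be a nonnegative measure on ℝ, let α > 1, and let φ : (0,1] → [0,∞) be increasing with F({y : |y| > x}) ≤ φ(x)/x^α for all x ∈ (0,1]. Then for every ε ∈ (0,1], ∫_{{y : ε < |y| ≤ 1}} |y| dF(y) ≤ ε^{1−α} · ( φ(ε) + φ(√ε)/(α − 1) + φ(1)·ε^{(α−1)/2}/(α − 1) ). -/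
open MeasureTheory Filter Topology

lemma aux_rpow_int (α : ℝ) (hα : 1 < α) (c a b : ℝ) (hc : 0 ≤ c) (ha : 0 < a) (hab : a ≤ b) :
    ∫⁻ t in Set.Ioc a b, ENNReal.ofReal (c / t ^ α)
      ≤ ENNReal.ofReal (c * (a ^ (1 - α) / (α - 1))) := by
  have h0 : (0:ℝ) ∉ Set.uIcc a b := by
    rw [Set.mem_uIcc]; push_neg
    constructor <;> intro h <;> linarith
  have hint : IntervalIntegrable (fun t : ℝ => c * t ^ (-α)) volume a b :=
    (intervalIntegral.intervalIntegrable_rpow (Or.inr h0)).const_mul c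
  have hIoc : IntegrableOn (fun t : ℝ => c * t ^ (-α)) (Set.Ioc a b) volume :=
    (intervalIntegrable_iff_integrableOn_Ioc_of_le hab).mp hint
  have hcongr : ∀ t ∈ Set.Ioc a b, ENNReal.ofReal (c / t ^ α) = ENNReal.ofReal (c * t ^ (-α)) := by
    intro t ht
    rw [Real.rpow_neg (le_of_lt (lt_of_lt_of_le ha ht.1.le)), div_eq_mul_inv]
  rw [setLIntegral_congr_fun measurableSet_Ioc hcongr]
  rw [← ofReal_integral_eq_lintegral_ofReal hIoc]
  · apply ENNReal.ofReal_le_ofReal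
    have hval : ∫ t in Set.Ioc a b, c * t ^ (-α) = c * ((b ^ (-α + 1) - a ^ (-α + 1)) / (-α + 1)) := by
      rw [← intervalIntegral.integral_of_le hab, intervalIntegral.integral_const_mul,
        integral_rpow (Or.inr ⟨by intro h; linarith, h0⟩)]
    rw [hval]
    apply mul_le_mul_of_nonneg_left _ hc
    have hb : (0:ℝ) ≤ b ^ (-α + 1) := Real.rpow_nonneg (by linarith) _
    have h1 : (b ^ (-α + 1) - a ^ (-α + 1)) / (-α + 1) = (a ^ (-α + 1) - b ^ (-α + 1)) / (α - 1) := by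
      rw [div_eq_div_iff (by linarith) (by linarith)]; ring
    rw [h1]
    have : a ^ (1 - α) = a ^ (-α + 1) := by ring_nf
    rw [this]
    apply div_le_div_of_nonneg_right ?_ (by linarith) |>.trans_eq rfl
    · linarith
  · filter_upwards [ae_restrict_mem measurableSet_Ioc] with t ht
    exact mul_nonneg hc (Real.rpow_nonneg (le_of_lt (lt_of_lt_of_le ha ht.1.le)) _)

/-- First-moment estimate away from 0 for a Lévy measure dominated by an α-stable tail,
case α > 1 (Lemma 7.1, eq. Fmoments_awayfrom0). -/
theorem stmt_3 (F : Measure ℝ) (α : ℝ) (hα : 1 < α)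
    (φ : ℝ → ℝ) (hφ0 : ∀ x ∈ Set.Ioc (0:ℝ) 1, 0 ≤ φ x)
    (hφmono : MonotoneOn φ (Set.Ioc (0:ℝ) 1))
    (hF : ∀ x ∈ Set.Ioc (0:ℝ) 1, F {y | x < |y|} ≤ ENNReal.ofReal (φ x / x ^ α))
    (ε : ℝ) (hε : ε ∈ Set.Ioc (0:ℝ) 1) :
    ∫⁻ y in {y : ℝ | ε < |y| ∧ |y| ≤ 1}, ENNReal.ofReal |y| ∂F
      ≤ ENNReal.ofReal (ε ^ (1 - α) *
          (φ ε + φ (Real.sqrt ε) / (α - 1) + φ 1 * ε ^ ((α - 1) / 2) / (α - 1))) := by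
  obtain ⟨hε0, hε1⟩ := hε
  set s := Real.sqrt ε with hs_def
  have hs0 : 0 < s := Real.sqrt_pos.mpr hε0
  have hs1 : s ≤ 1 := by
    rw [show (1:ℝ) = Real.sqrt 1 by simp]
    exact Real.sqrt_le_sqrt hε1
  have hεs : ε ≤ s := by
    nlinarith [Real.mul_self_sqrt hε0.le, Real.sqrt_nonneg ε]
  have habs : Measurable fun y : ℝ => |y| := continuous_abs.measurable
  set S : Set ℝ := {y : ℝ | ε < |y| ∧ |y| ≤ 1} with hS_def
  have hlayer : ∫⁻ y in S, ENNReal.ofReal |y| ∂F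
      = ∫⁻ t in Set.Ioi (0:ℝ), (F.restrict S) {y | t < |y|} :=
    lintegral_eq_lintegral_meas_lt (F.restrict S)
      (Filter.Eventually.of_forall fun y => abs_nonneg y) habs.aemeasurable
  set g : ℝ → ENNReal := fun t =>
    (Set.Ioo (0:ℝ) ε).indicator (fun _ => ENNReal.ofReal (φ ε / ε ^ α)) t
    + (Set.Icc ε s).indicator (fun u => ENNReal.ofReal (φ s / u ^ α)) t
    + (Set.Icc s (1:ℝ)).indicator (fun u => ENNReal.ofReal (φ 1 / u ^ α)) t with hg_def
  have hbound : ∀ t ∈ Set.Ioi (0:ℝ), (F.restrict S) {y | t < |y|} ≤ g t := by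
    intro t ht
    have ht0 : (0:ℝ) < t := ht
    rw [Measure.restrict_apply (measurableSet_lt measurable_const habs)]
    rcases lt_or_ge t ε with h1 | h1
    · have hsub : {y : ℝ | t < |y|} ∩ S ⊆ {y : ℝ | ε < |y|} := fun y hy => hy.2.1
      calc F ({y : ℝ | t < |y|} ∩ S) ≤ F {y : ℝ | ε < |y|} := measure_mono hsub
        _ ≤ ENNReal.ofReal (φ ε / ε ^ α) := hF ε ⟨hε0, hε1⟩
        _ ≤ g t := by
            rw [hg_def]
            dsimp only
            rw [Set.indicator_of_mem (Set.mem_Ioo.mpr ⟨ht0, h1⟩)]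
            exact le_add_right le_self_add
    · rcases le_or_gt t 1 with h2 | h2
      · have htmem : t ∈ Set.Ioc (0:ℝ) 1 := ⟨ht0, h2⟩
        have htpow : (0:ℝ) < t ^ α := Real.rpow_pos_of_pos ht0 α
        have hFt : F ({y : ℝ | t < |y|} ∩ S) ≤ ENNReal.ofReal (φ t / t ^ α) :=
          le_trans (measure_mono Set.inter_subset_left) (hF t htmem)
        rcases le_or_gt t s with h3 | h3
        · have hmono : φ t ≤ φ s := hφmono htmem ⟨hs0, hs1⟩ h3
          calc F ({y : ℝ | t < |y|} ∩ S) ≤ ENNReal.ofReal (φ t / t ^ α) := hFt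
            _ ≤ ENNReal.ofReal (φ s / t ^ α) :=
                ENNReal.ofReal_le_ofReal ((div_le_div_iff_of_pos_right htpow).mpr hmono)
            _ ≤ g t := by
                rw [hg_def]
                dsimp only
                rw [Set.indicator_of_mem (Set.mem_Icc.mpr ⟨h1, h3⟩)]
                exact le_add_right le_add_self
        · have hmono : φ t ≤ φ 1 := hφmono htmem ⟨one_pos, le_refl 1⟩ h2
          calc F ({y : ℝ | t < |y|} ∩ S) ≤ ENNReal.ofReal (φ t / t ^ α) := hFt
            _ ≤ ENNReal.ofReal (φ 1 / t ^ α) :=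
                ENNReal.ofReal_le_ofReal ((div_le_div_iff_of_pos_right htpow).mpr hmono)
            _ ≤ g t := by
                rw [hg_def]
                dsimp only
                rw [Set.indicator_of_mem (Set.mem_Icc.mpr ⟨h3.le, h2⟩)]
                exact le_add_self
      · have hempty : {y : ℝ | t < |y|} ∩ S = ∅ := by
          apply Set.eq_empty_iff_forall_notMem.mpr
          rintro y ⟨hy1, hy2, hy3⟩
          simp only [Set.mem_setOf_eq] at hy1
          linarith
        rw [hempty, measure_empty]
        exact zero_le
  have hm2 : Measurable fun t : ℝ =>
      (Set.Icc ε s).indicator (fun u => ENNReal.ofReal (φ s / u ^ α)) t :=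
    Measurable.indicator (by fun_prop) measurableSet_Icc
  have hm3 : Measurable fun t : ℝ =>
      (Set.Icc s (1:ℝ)).indicator (fun u => ENNReal.ofReal (φ 1 / u ^ α)) t :=
    Measurable.indicator (by fun_prop) measurableSet_Icc
  -- Values of the three pieces
  have hεα : (0:ℝ) < ε ^ α := Real.rpow_pos_of_pos hε0 α
  have hA0 : 0 ≤ φ ε / ε ^ α := div_nonneg (hφ0 ε ⟨hε0, hε1⟩) hεα.le
  have hB0 : 0 ≤ φ s := hφ0 s ⟨hs0, hs1⟩
  have hC0 : 0 ≤ φ 1 := hφ0 1 ⟨one_pos, le_refl 1⟩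
  have hI1 : ∫⁻ t, (Set.Ioo (0:ℝ) ε).indicator
      (fun _ => ENNReal.ofReal (φ ε / ε ^ α)) t
      = ENNReal.ofReal (φ ε / ε ^ α * ε) := by
    rw [lintegral_indicator measurableSet_Ioo, setLIntegral_const, Real.volume_Ioo,
      ← ENNReal.ofReal_mul hA0]
    norm_num
  have hI2 : ∫⁻ t, (Set.Icc ε s).indicator (fun u => ENNReal.ofReal (φ s / u ^ α)) t
      ≤ ENNReal.ofReal (φ s * (ε ^ (1 - α) / (α - 1))) := by
    rw [lintegral_indicator measurableSet_Icc,
      ← Measure.restrict_congr_set (Ioc_ae_eq_Icc (μ := volume) (a := ε) (b := s))]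
    exact aux_rpow_int α hα (φ s) ε s hB0 hε0 hεs
  have hI3 : ∫⁻ t, (Set.Icc s (1:ℝ)).indicator (fun u => ENNReal.ofReal (φ 1 / u ^ α)) t
      ≤ ENNReal.ofReal (φ 1 * (s ^ (1 - α) / (α - 1))) := by
    rw [lintegral_indicator measurableSet_Icc,
      ← Measure.restrict_congr_set (Ioc_ae_eq_Icc (μ := volume) (a := s) (b := 1))]
    exact aux_rpow_int α hα (φ 1) s 1 hC0 hs0 hs1
  -- algebraic identities
  have hA : φ ε / ε ^ α * ε = φ ε * ε ^ (1 - α) := by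
    rw [Real.rpow_sub hε0, Real.rpow_one]; ring
  have hsε : s ^ (1 - α) = ε ^ (1 - α) * ε ^ ((α - 1) / 2) := by
    rw [hs_def, Real.sqrt_eq_rpow]
    rw [← Real.rpow_mul hε0.le, ← Real.rpow_add hε0]
    congr 1
    ring
  calc ∫⁻ y in S, ENNReal.ofReal |y| ∂F
      = ∫⁻ t in Set.Ioi (0:ℝ), (F.restrict S) {y | t < |y|} := hlayer
    _ ≤ ∫⁻ t in Set.Ioi (0:ℝ), g t := setLIntegral_mono' measurableSet_Ioi hbound
    _ ≤ ∫⁻ t, g t := setLIntegral_le_lintegral _ _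
    _ = (∫⁻ t, (Set.Ioo (0:ℝ) ε).indicator (fun _ => ENNReal.ofReal (φ ε / ε ^ α)) t)
        + (∫⁻ t, (Set.Icc ε s).indicator (fun u => ENNReal.ofReal (φ s / u ^ α)) t)
        + (∫⁻ t, (Set.Icc s (1:ℝ)).indicator (fun u => ENNReal.ofReal (φ 1 / u ^ α)) t) := by
        rw [hg_def]
        rw [lintegral_add_right _ hm3, lintegral_add_right _ hm2]
    _ ≤ ENNReal.ofReal (φ ε / ε ^ α * ε) + ENNReal.ofReal (φ s * (ε ^ (1 - α) / (α - 1)))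
        + ENNReal.ofReal (φ 1 * (s ^ (1 - α) / (α - 1))) := by
        exact add_le_add (add_le_add hI1.le hI2) hI3
    _ = ENNReal.ofReal (φ ε / ε ^ α * ε + φ s * (ε ^ (1 - α) / (α - 1))
        + φ 1 * (s ^ (1 - α) / (α - 1))) := by
        rw [← ENNReal.ofReal_add (mul_nonneg hA0 hε0.le)
          (mul_nonneg hB0 (div_nonneg (Real.rpow_nonneg hε0.le _) (by linarith))),
          ← ENNReal.ofReal_add (add_nonneg (mul_nonneg hA0 hε0.le)
            (mul_nonneg hB0 (div_nonneg (Real.rpow_nonneg hε0.le _) (by linarith))))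
          (mul_nonneg hC0 (div_nonneg (Real.rpow_nonneg hs0.le _) (by linarith)))]
    _ ≤ ENNReal.ofReal (ε ^ (1 - α) *
          (φ ε + φ s / (α - 1) + φ 1 * ε ^ ((α - 1) / 2) / (α - 1))) := by
        apply ENNReal.ofReal_le_ofReal
        rw [hA, hsε]
        apply le_of_eq
        ring
end

section
/- Let h : ℝ → ℝ be an even, differentiable probability density with h(w) > 0 for all w; set h̆(w) = h(w) + w·h′(w), and assume I(h) = ∫ h̆²/h dw < ∞, J(h) = ∫ (h′)²/h dw < ∞ and ∫ |h̆(w)·h′(w)|/h(w) dw < ∞. Fix σ > 0, c > 0, d > 0, θ ∈ ℝ, and define p(x) = (1/(σc))·h((x − θd)/(σc)), with scores r_σ(x) = −(1/(σ²c))·h̆((x − θd)/(σc)) (the σ-derivative of p) and r_θ(x) = −(d/(σ²c²))·h′((x − θd)/(σc)) (the θ-derivative of p). Then ∫ r_σ(x)²/p(x) dx = I(h)/σ², ∫ r_θ(x)²/p(x) dx = (d²/(σ²c²))·J(h), and ∫ r_σ(x)·r_θ(x)/p(x) dx = 0. -/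
open MeasureTheory Filter Topology

/-- Change of variables `x ↦ (x - b)/a` for the Lebesgue integral. -/
lemma key_cov (F : ℝ → ℝ) (a b : ℝ) (ha : 0 < a) :
    ∫ x : ℝ, F ((x - b) / a) = a * ∫ w, F w := by
  have h1 : ∫ x : ℝ, F ((x - b) / a) = ∫ x : ℝ, F (x / a) :=
    MeasureTheory.integral_sub_right_eq_self (fun x => F (x / a)) b
  rw [h1, MeasureTheory.Measure.integral_comp_div F a, abs_of_pos ha, smul_eq_mul]

/-- The integral of an odd function over ℝ vanishes. -/
lemma odd_integral_zero (F : ℝ → ℝ) (hF : ∀ x, F (-x) = -F x) :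
    ∫ x : ℝ, F x = 0 := by
  have h1 : ∫ x : ℝ, F (-x) = ∫ x, F x := MeasureTheory.integral_neg_eq_self F _
  have h2 : ∫ x : ℝ, F (-x) = -∫ x, F x := by
    simp_rw [hF]; exact integral_neg F
  linarith [h1, h2]

/-- Theorem 5.1 (stable plus drift): the 2×2 Fisher information matrix for (σ, θ)
in the location-scale family x ↦ (1/(σc))·h((x − θd)/(σc)) is diagonal with entries
I(h)/σ² and (d²/(σ²c²))·J(h). -/
theorem stmt_6 (h : ℝ → ℝ) (heven : ∀ w, h (-w) = h w)
    (hdiff : Differentiable ℝ h) (hpos : ∀ w, 0 < h w) (hdens : ∫ w, h w = 1)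
    (hI : Integrable (fun w => (h w + w * deriv h w) ^ 2 / h w))
    (hJ : Integrable (fun w => (deriv h w) ^ 2 / h w))
    (hX : Integrable (fun w => |(h w + w * deriv h w) * deriv h w| / h w))
    (σ c d θ : ℝ) (hσ : 0 < σ) (hc : 0 < c) (hd : 0 < d) :
    (∫ x : ℝ, ((1 / (σ ^ 2 * c)) *
          (h ((x - θ * d) / (σ * c)) +
            ((x - θ * d) / (σ * c)) * deriv h ((x - θ * d) / (σ * c)))) ^ 2 /
        ((1 / (σ * c)) * h ((x - θ * d) / (σ * c)))
      = (∫ w, (h w + w * deriv h w) ^ 2 / h w) / σ ^ 2) ∧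
    (∫ x : ℝ, ((d / (σ ^ 2 * c ^ 2)) * deriv h ((x - θ * d) / (σ * c))) ^ 2 /
        ((1 / (σ * c)) * h ((x - θ * d) / (σ * c)))
      = (d ^ 2 / (σ ^ 2 * c ^ 2)) * ∫ w, (deriv h w) ^ 2 / h w) ∧
    (∫ x : ℝ, (-(1 / (σ ^ 2 * c)) *
          (h ((x - θ * d) / (σ * c)) +
            ((x - θ * d) / (σ * c)) * deriv h ((x - θ * d) / (σ * c)))) *
        (-(d / (σ ^ 2 * c ^ 2)) * deriv h ((x - θ * d) / (σ * c))) /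
        ((1 / (σ * c)) * h ((x - θ * d) / (σ * c)))
      = 0) := by
  have ha : (0:ℝ) < σ * c := mul_pos hσ hc
  have hσ' : σ ≠ 0 := hσ.ne'
  have hc' : c ≠ 0 := hc.ne'
  have hodd : ∀ w, deriv h (-w) = -deriv h w := by
    intro w
    have : deriv (fun x => h (-x)) (-w) = -deriv h w := by
      rw [deriv_comp_neg]; simp
    rw [← this]
    congr 1
    ext x
    exact (heven x).symm
  refine ⟨?_, ?_, ?_⟩
  · -- σσ entry
    have heq : ∀ x : ℝ,
        ((1 / (σ ^ 2 * c)) *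
          (h ((x - θ * d) / (σ * c)) +
            ((x - θ * d) / (σ * c)) * deriv h ((x - θ * d) / (σ * c)))) ^ 2 /
        ((1 / (σ * c)) * h ((x - θ * d) / (σ * c)))
        = (fun w => (1 / (σ ^ 3 * c)) * ((h w + w * deriv h w) ^ 2 / h w))
            ((x - θ * d) / (σ * c)) := by
      intro x
      set w := (x - θ * d) / (σ * c)
      have hw := (hpos w).ne'
      field_simp
    rw [integral_congr_ae (Filter.Eventually.of_forall heq),
      key_cov (fun w => (1 / (σ ^ 3 * c)) * ((h w + w * deriv h w) ^ 2 / h w)) (σ * c) (θ * d) ha,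
      integral_const_mul]
    field_simp
  · -- θθ entry
    have heq : ∀ x : ℝ,
        ((d / (σ ^ 2 * c ^ 2)) * deriv h ((x - θ * d) / (σ * c))) ^ 2 /
        ((1 / (σ * c)) * h ((x - θ * d) / (σ * c)))
        = (fun w => (d ^ 2 / (σ ^ 3 * c ^ 3)) * ((deriv h w) ^ 2 / h w))
            ((x - θ * d) / (σ * c)) := by
      intro x
      set w := (x - θ * d) / (σ * c)
      have hw := (hpos w).ne'
      field_simp
    rw [integral_congr_ae (Filter.Eventually.of_forall heq),
      key_cov (fun w => (d ^ 2 / (σ ^ 3 * c ^ 3)) * ((deriv h w) ^ 2 / h w)) (σ * c) (θ * d) ha,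
      integral_const_mul]
    field_simp
  · -- cross term
    have heq : ∀ x : ℝ,
        (-(1 / (σ ^ 2 * c)) *
          (h ((x - θ * d) / (σ * c)) +
            ((x - θ * d) / (σ * c)) * deriv h ((x - θ * d) / (σ * c)))) *
        (-(d / (σ ^ 2 * c ^ 2)) * deriv h ((x - θ * d) / (σ * c))) /
        ((1 / (σ * c)) * h ((x - θ * d) / (σ * c)))
        = (fun w => (d / (σ ^ 3 * c ^ 2)) *
            ((h w + w * deriv h w) * deriv h w / h w)) ((x - θ * d) / (σ * c)) := by
      intro x
      set w := (x - θ * d) / (σ * c)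
      have hw := (hpos w).ne'
      field_simp
    rw [integral_congr_ae (Filter.Eventually.of_forall heq),
      key_cov (fun w => (d / (σ ^ 3 * c ^ 2)) * ((h w + w * deriv h w) * deriv h w / h w)) (σ * c) (θ * d) ha]
    have hzero : ∫ w, (d / (σ ^ 3 * c ^ 2)) *
        ((h w + w * deriv h w) * deriv h w / h w) = 0 := by
      apply odd_integral_zero
      intro w
      rw [hodd, heven]
      ring
    rw [hzero, mul_zero]
end

section
/- Let h : ℝ → ℝ be a differentiable probability density with h(w) > 0 for all w and J(h) = ∫ h′(w)²/h(w) dw < ∞. Let G be a probability measure on ℝ with ∫ y² dG(y) < ∞, let s > 0 and θ ∈ ℝ, and define p(x) = (1/s)∫ h((x − θy)/s) dG(y) and D(x) = (1/s²)∫ y·h′((x − θy)/s) dG(y). Then ∫ D(x)²/p(x) dx ≤ (J(h)/s²)·∫ y² dG(y). -/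
open MeasureTheory Filter Topology
open scoped ENNReal NNReal

lemma aux_conj22 : Real.HolderConjugate 2 2 := Real.HolderConjugate.two_two

lemma aux_pointwise (h : ℝ → ℝ) (hmh : Measurable h) (hmd : Measurable (deriv h))
    (hpos : ∀ w, 0 < h w) (G : Measure ℝ) [IsProbabilityMeasure G]
    (s θ : ℝ) (hs : 0 < s) (x : ℝ) :
    ENNReal.ofReal (((1 / s ^ 2) * ∫ y, y * deriv h ((x - θ * y) / s) ∂G) ^ 2 /
          ((1 / s) * ∫ y, h ((x - θ * y) / s) ∂G))
      ≤ ENNReal.ofReal (1 / s ^ 3) *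
        ∫⁻ y, ENNReal.ofReal
          (y ^ 2 * ((deriv h ((x - θ * y) / s)) ^ 2 / h ((x - θ * y) / s))) ∂G := by
  set u : ℝ → ℝ := fun y => (x - θ * y) / s with hu_def
  have hu : Measurable u := (measurable_const.sub (measurable_id.const_mul θ)).div_const s
  set A : ℝ := ∫ y, y * deriv h (u y) ∂G with hA_def
  set B : ℝ := ∫ y, h (u y) ∂G with hB_def
  have hBnn : 0 ≤ B := integral_nonneg fun y => (hpos _).le
  rcases hBnn.eq_or_lt with hB0 | hBpos
  · rw [← hB0]
    simp
  · have hBint : Integrable (fun y => h (u y)) G := by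
      by_contra hc
      rw [hB_def, integral_undef hc] at hBpos
      exact lt_irrefl 0 hBpos
    set F1 : ℝ → ℝ≥0∞ := fun y =>
      ENNReal.ofReal (|y| * |deriv h (u y)| / Real.sqrt (h (u y))) with hF1_def
    set F2 : ℝ → ℝ≥0∞ := fun y => ENNReal.ofReal (Real.sqrt (h (u y))) with hF2_def
    have hmF1 : Measurable F1 :=
      ((measurable_id.abs.mul ((hmd.comp hu).abs)).div
        ((hmh.comp hu).sqrt)).ennreal_ofReal
    have hmF2 : Measurable F2 := ((hmh.comp hu).sqrt).ennreal_ofReal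
    have hsqrt_pos : ∀ w, 0 < Real.sqrt (h w) := fun w => Real.sqrt_pos.2 (hpos w)
    have key1 : ∀ y, ENNReal.ofReal |y * deriv h (u y)| = F1 y * F2 y := by
      intro y
      rw [hF1_def, hF2_def, ← ENNReal.ofReal_mul (by positivity)]
      congr 1
      rw [div_mul_cancel₀ _ (hsqrt_pos (u y)).ne', abs_mul]
    have hAbound : ENNReal.ofReal |A| ≤ ∫⁻ y, F1 y * F2 y ∂G := by
      calc ENNReal.ofReal |A| = (‖A‖₊ : ℝ≥0∞) := (Real.enorm_eq_ofReal_abs A).symm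
        _ ≤ ∫⁻ y, (‖y * deriv h (u y)‖₊ : ℝ≥0∞) ∂G :=
            enorm_integral_le_lintegral_enorm _
        _ = ∫⁻ y, F1 y * F2 y ∂G := by
            refine lintegral_congr fun y => ?_
            rw [← enorm_eq_nnnorm, Real.enorm_eq_ofReal_abs, key1]
    set C1 : ℝ≥0∞ := ∫⁻ y, F1 y ^ (2 : ℝ) ∂G with hC1_def
    set C2 : ℝ≥0∞ := ∫⁻ y, F2 y ^ (2 : ℝ) ∂G with hC2_def
    have hCS : ∫⁻ y, F1 y * F2 y ∂G ≤ C1 ^ (1/2 : ℝ) * C2 ^ (1/2 : ℝ) :=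
      ENNReal.lintegral_mul_le_Lp_mul_Lq G aux_conj22 hmF1.aemeasurable hmF2.aemeasurable
    have hC2 : C2 = ENNReal.ofReal B := by
      have : ∀ y, F2 y ^ (2 : ℝ) = ENNReal.ofReal (h (u y)) := by
        intro y
        show ENNReal.ofReal (Real.sqrt (h (u y))) ^ (2 : ℝ) = _
        rw [ENNReal.ofReal_rpow_of_nonneg (Real.sqrt_nonneg _) (by norm_num : (0:ℝ) ≤ 2)]
        congr 1
        rw [show ((2:ℝ)) = ((2:ℕ):ℝ) by norm_num, Real.rpow_natCast]
        exact Real.sq_sqrt (hpos _).le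
      rw [hC2_def, lintegral_congr this,
        ← MeasureTheory.ofReal_integral_eq_lintegral_ofReal hBint
          (Filter.Eventually.of_forall fun y => (hpos _).le)]
    have hC1 : C1 = ∫⁻ y, ENNReal.ofReal
        (y ^ 2 * ((deriv h (u y)) ^ 2 / h (u y))) ∂G := by
      refine lintegral_congr fun y => ?_
      show ENNReal.ofReal (|y| * |deriv h (u y)| / Real.sqrt (h (u y))) ^ (2 : ℝ) = _
      rw [ENNReal.ofReal_rpow_of_nonneg (by positivity) (by norm_num : (0:ℝ) ≤ 2)]
      congr 1
      rw [show ((2:ℝ)) = ((2:ℕ):ℝ) by norm_num, Real.rpow_natCast]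
      rw [div_pow, mul_pow, sq_abs, sq_abs, Real.sq_sqrt (hpos _).le]
      ring
    have hsq : ENNReal.ofReal (A ^ 2) ≤ C1 * C2 := by
      have h1 : ENNReal.ofReal (A ^ 2) = ENNReal.ofReal |A| * ENNReal.ofReal |A| := by
        rw [← ENNReal.ofReal_mul (abs_nonneg _), ← sq_abs, sq]
      rw [h1]
      calc ENNReal.ofReal |A| * ENNReal.ofReal |A|
          ≤ (C1 ^ (1/2 : ℝ) * C2 ^ (1/2 : ℝ)) * (C1 ^ (1/2 : ℝ) * C2 ^ (1/2 : ℝ)) :=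
            mul_le_mul' (hAbound.trans hCS) (hAbound.trans hCS)
        _ = (C1 ^ (1/2 : ℝ) * C1 ^ (1/2 : ℝ)) * (C2 ^ (1/2 : ℝ) * C2 ^ (1/2 : ℝ)) := by ring
        _ = C1 * C2 := by
            rw [← ENNReal.rpow_add_of_nonneg (1/2) (1/2) (by norm_num) (by norm_num),
              ← ENNReal.rpow_add_of_nonneg (1/2) (1/2) (by norm_num) (by norm_num)]
            norm_num
    have hreal : ((1 / s ^ 2) * A) ^ 2 / ((1 / s) * B) = (1 / s ^ 3) * (A ^ 2 / B) := by
      field_simp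
    rw [hreal, ENNReal.ofReal_mul (by positivity), ENNReal.ofReal_div_of_pos hBpos]
    refine mul_le_mul_right ?_ _
    calc ENNReal.ofReal (A ^ 2) / ENNReal.ofReal B
        ≤ C1 * C2 / ENNReal.ofReal B := ENNReal.div_le_div_right hsq _
      _ = C1 * ENNReal.ofReal B / ENNReal.ofReal B := by rw [hC2]
      _ = C1 := by
          rw [mul_div_assoc, ENNReal.div_self (by simpa using hBpos) ENNReal.ofReal_ne_top,
            mul_one]
      _ = _ := hC1

/-- Theorem 4.3: the (θ,θ) Fisher information of the convolution model is bounded by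
(J(h)/s²) · ∫ y² dG(y). -/
theorem stmt_7 (h : ℝ → ℝ) (hdiff : Differentiable ℝ h) (hpos : ∀ w, 0 < h w)
    (hdens : ∫ w, h w = 1)
    (hJ : Integrable (fun w => (deriv h w) ^ 2 / h w))
    (G : Measure ℝ) [IsProbabilityMeasure G]
    (hmom : Integrable (fun y => y ^ 2) G)
    (s θ : ℝ) (hs : 0 < s) :
    ∫⁻ x : ℝ, ENNReal.ofReal
        (((1 / s ^ 2) * ∫ y, y * deriv h ((x - θ * y) / s) ∂G) ^ 2 /
          ((1 / s) * ∫ y, h ((x - θ * y) / s) ∂G))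
      ≤ ENNReal.ofReal (((∫ w, (deriv h w) ^ 2 / h w) / s ^ 2) * ∫ y, y ^ 2 ∂G) := by
  have hmh : Measurable h := hdiff.continuous.measurable
  have hmd : Measurable (deriv h) := measurable_deriv h
  set q : ℝ → ℝ := fun w => (deriv h w) ^ 2 / h w with hq_def
  have hmq : Measurable q := (hmd.pow_const 2).div hmh
  have hqnn : ∀ w, 0 ≤ q w := fun w => div_nonneg (sq_nonneg _) (hpos w).le
  set J : ℝ := ∫ w, q w with hJ_def
  have hJnn : 0 ≤ J := integral_nonneg hqnn
  set m2 : ℝ := ∫ y, y ^ 2 ∂G with hm2_def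
  have hm2nn : 0 ≤ m2 := integral_nonneg fun y => sq_nonneg y
  -- step 1: pointwise bound
  have step1 := fun x => aux_pointwise h hmh hmd hpos G s θ hs x
  refine le_trans (lintegral_mono step1) ?_
  -- pull out the constant
  rw [lintegral_const_mul' _ _ ENNReal.ofReal_ne_top]
  -- Tonelli
  have hΦ : AEMeasurable (Function.uncurry fun x y =>
      ENNReal.ofReal (y ^ 2 * q ((x - θ * y) / s))) (volume.prod G) := by
    apply Measurable.aemeasurable
    apply Measurable.ennreal_ofReal
    exact (measurable_snd.pow_const 2).mul
      (hmq.comp ((measurable_fst.sub (measurable_snd.const_mul θ)).div_const s))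
  have hswap : ∫⁻ x : ℝ, (∫⁻ y, ENNReal.ofReal (y ^ 2 * q ((x - θ * y) / s)) ∂G)
      = ∫⁻ y, (∫⁻ x : ℝ, ENNReal.ofReal (y ^ 2 * q ((x - θ * y) / s))) ∂G :=
    lintegral_lintegral_swap (f := fun x y => ENNReal.ofReal (y ^ 2 * q ((x - θ * y) / s))) hΦ
  rw [hswap]
  -- inner integral computation
  have hinner : ∀ y : ℝ, (∫⁻ x : ℝ, ENNReal.ofReal (y ^ 2 * q ((x - θ * y) / s)))
      = ENNReal.ofReal (y ^ 2) * ENNReal.ofReal (s * J) := by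
    intro y
    have hcomp : Integrable (fun x : ℝ => q ((x - θ * y) / s)) := by
      have h1 : Integrable (fun x : ℝ => q (x / s)) := hJ.comp_div hs.ne'
      exact h1.comp_sub_right (θ * y)
    have hint_val : ∫ x : ℝ, q ((x - θ * y) / s) = s * J := by
      have h2 : ∫ x : ℝ, q ((x - θ * y) / s) = ∫ x : ℝ, q (x / s) :=
        integral_sub_right_eq_self (fun x : ℝ => q (x / s)) (θ * y)
      rw [h2, MeasureTheory.Measure.integral_comp_div q s, abs_of_pos hs, smul_eq_mul, hJ_def]
    calc ∫⁻ x : ℝ, ENNReal.ofReal (y ^ 2 * q ((x - θ * y) / s))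
        = ∫⁻ x : ℝ, ENNReal.ofReal (y ^ 2) * ENNReal.ofReal (q ((x - θ * y) / s)) := by
          refine lintegral_congr fun x => ?_
          rw [ENNReal.ofReal_mul (sq_nonneg y)]
      _ = ENNReal.ofReal (y ^ 2) * ∫⁻ x : ℝ, ENNReal.ofReal (q ((x - θ * y) / s)) :=
          lintegral_const_mul' _ _ ENNReal.ofReal_ne_top
      _ = ENNReal.ofReal (y ^ 2) * ENNReal.ofReal (s * J) := by
          rw [← MeasureTheory.ofReal_integral_eq_lintegral_ofReal hcomp
            (Filter.Eventually.of_forall fun x => hqnn _), hint_val]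
  rw [lintegral_congr (μ := G) hinner, lintegral_mul_const' _ _ ENNReal.ofReal_ne_top,
    ← MeasureTheory.ofReal_integral_eq_lintegral_ofReal hmom
      (Filter.Eventually.of_forall fun y => sq_nonneg y)]
  rw [← ENNReal.ofReal_mul (by positivity), ← ENNReal.ofReal_mul (by positivity)]
  apply ENNReal.ofReal_le_ofReal
  refine le_of_eq ?_
  field_simp
  ring
end

section
/- Let h : ℝ → ℝ be a continuous, bounded probability density with h(w) > 0 for all w, and let h̆ : ℝ → ℝ be continuous and bounded with ∫ h̆(w)²/h(w) dw < ∞. Let (μ_n) be a sequence of probability measures on ℝ converging weakly to the Dirac mass δ₀. Then ∫ ( ∫ h̆(x − u) dμ_n(u) )² / ( ∫ h(x − u) dμ_n(u) ) dx → ∫ h̆(w)²/h(w) dw as n → ∞. -/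
open MeasureTheory Filter Topology ENNReal

/-- Analytic core of Theorem 4.2(a)-(b): if μₙ converges weakly to δ₀, then the Fisher-type
information of the convolved model converges to that of the base model. -/
theorem stmt_8 (h k : ℝ → ℝ) (hcont : Continuous h) (hbd : ∃ M, ∀ x, h x ≤ M)
    (hpos : ∀ w, 0 < h w) (hdens : ∫ w, h w = 1)
    (kcont : Continuous k) (kbd : ∃ M, ∀ x, |k x| ≤ M)
    (hfin : Integrable (fun w => k w ^ 2 / h w))
    (μ : ℕ → Measure ℝ) [∀ n, IsProbabilityMeasure (μ n)]
    (hconv : ∀ f : ℝ → ℝ, Continuous f → (∃ M, ∀ x, |f x| ≤ M) →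
      Tendsto (fun n => ∫ x, f x ∂(μ n)) atTop (𝓝 (f 0))) :
    Tendsto (fun n => ∫ x, (∫ u, k (x - u) ∂(μ n)) ^ 2 / (∫ u, h (x - u) ∂(μ n)))
      atTop (𝓝 (∫ w, k w ^ 2 / h w)) := by
  classical
  obtain ⟨M, hM⟩ := hbd
  obtain ⟨K, hK⟩ := kbd
  have hMabs : ∀ x, |h x| ≤ M := fun x => by
    rw [abs_of_pos (hpos x)]; exact hM x
  have hnn : ∀ w, (0:ℝ) ≤ h w := fun w => (hpos w).le
  have qcont : Continuous (fun w => k w ^ 2 / h w) :=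
    (kcont.pow 2).div hcont (fun w => (hpos w).ne')
  have qnn : ∀ w, (0:ℝ) ≤ k w ^ 2 / h w := fun w => div_nonneg (sq_nonneg _) (hnn w)
  set I' : ℝ≥0∞ := ∫⁻ w, ENNReal.ofReal (k w ^ 2 / h w) with hI'def
  have hI' : I' = ENNReal.ofReal (∫ w, k w ^ 2 / h w) :=
    (ofReal_integral_eq_lintegral_ofReal hfin (Filter.Eventually.of_forall qnn)).symm
  have hI'ne : I' ≠ ⊤ := by rw [hI']; exact ENNReal.ofReal_ne_top
  -- integrability of translated bounded continuous functions
  have integ : ∀ (g : ℝ → ℝ), Continuous g → ∀ (C : ℝ), (∀ y, |g y| ≤ C) →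
      ∀ (n : ℕ) (x : ℝ), Integrable (fun u => g (x - u)) (μ n) := by
    intro g gc C gb n x
    refine Integrable.mono' (integrable_const C)
      ((gc.comp (continuous_const.sub continuous_id)).aestronglyMeasurable) ?_
    exact Filter.Eventually.of_forall fun u => by
      simpa [Real.norm_eq_abs] using gb (x - u)
  -- positivity of the denominator
  have Dpos : ∀ n x, 0 < ∫ u, h (x - u) ∂(μ n) := by
    intro n x
    rw [integral_pos_iff_support_of_nonneg (fun u => (hpos _).le)
      (integ h hcont M hMabs n x)]
    have : Function.support (fun u => h (x - u)) = Set.univ := by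
      ext u; simp [Function.support, (hpos (x - u)).ne']
    rw [this]
    simp
  -- continuity of convolutions
  have contConv : ∀ (g : ℝ → ℝ), Continuous g → ∀ (C : ℝ), (∀ y, |g y| ≤ C) → ∀ n,
      Continuous (fun x => ∫ u, g (x - u) ∂(μ n)) := by
    intro g gc C gb n
    apply continuous_of_dominated
      (bound := fun _ : ℝ => C)
    · intro x
      exact (gc.comp (continuous_const.sub continuous_id)).aestronglyMeasurable
    · intro x
      exact Filter.Eventually.of_forall fun u => by
        simpa [Real.norm_eq_abs] using gb (x - u)
    · exact integrable_const C
    · exact Filter.Eventually.of_forall fun u =>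
        gc.comp (continuous_id.sub continuous_const)
  -- the integrand and its continuity
  set F : ℕ → ℝ → ℝ :=
    fun n x => (∫ u, k (x - u) ∂(μ n)) ^ 2 / (∫ u, h (x - u) ∂(μ n)) with hFdef
  have Fnn : ∀ n x, 0 ≤ F n x := fun n x =>
    div_nonneg (sq_nonneg _) (Dpos n x).le
  have Fcont : ∀ n, Continuous (F n) := fun n =>
    ((contConv k kcont K hK n).pow 2).div (contConv h hcont M hMabs n)
      (fun x => (Dpos n x).ne')
  -- pointwise convergence
  have Fptw : ∀ x, Tendsto (fun n => F n x) atTop (𝓝 (k x ^ 2 / h x)) := by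
    intro x
    have hNum : Tendsto (fun n => ∫ u, k (x - u) ∂(μ n)) atTop (𝓝 (k x)) := by
      have := hconv (fun u => k (x - u))
        (kcont.comp (continuous_const.sub continuous_id))
        ⟨K, fun u => hK (x - u)⟩
      simpa using this
    have hDen : Tendsto (fun n => ∫ u, h (x - u) ∂(μ n)) atTop (𝓝 (h x)) := by
      have := hconv (fun u => h (x - u))
        (hcont.comp (continuous_const.sub continuous_id))
        ⟨M, fun u => hMabs (x - u)⟩
      simpa using this
    exact (hNum.pow 2).div hDen (hpos x).ne'
  -- Cauchy-Schwarz bound on the integrand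
  have CS : ∀ n x, ENNReal.ofReal (F n x)
      ≤ ∫⁻ u, ENNReal.ofReal (k (x - u) ^ 2 / h (x - u)) ∂(μ n) := by
    intro n x
    set N : ℝ := ∫ u, k (x - u) ∂(μ n) with hN
    set D : ℝ := ∫ u, h (x - u) ∂(μ n) with hD
    have hDpos : 0 < D := Dpos n x
    set A : ℝ≥0∞ := ∫⁻ u, ENNReal.ofReal (k (x - u) ^ 2 / h (x - u)) ∂(μ n) with hA
    have hBD : (∫⁻ u, ENNReal.ofReal (h (x - u)) ∂(μ n)) = ENNReal.ofReal D :=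
      (ofReal_integral_eq_lintegral_ofReal (integ h hcont M hMabs n x)
        (Filter.Eventually.of_forall fun u => (hpos _).le)).symm
    -- step 1: |N| as a lintegral bound
    have habs : Integrable (fun u => |k (x - u)|) (μ n) :=
      (integ k kcont K hK n x).abs
    have h1 : ENNReal.ofReal |N| ≤ ∫⁻ u, ENNReal.ofReal |k (x - u)| ∂(μ n) := by
      have hle : |N| ≤ ∫ u, |k (x - u)| ∂(μ n) := by
        simpa [Real.norm_eq_abs] using
          norm_integral_le_integral_norm (μ := μ n) (fun u => k (x - u))
      calc ENNReal.ofReal |N| ≤ ENNReal.ofReal (∫ u, |k (x - u)| ∂(μ n)) :=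
            ENNReal.ofReal_le_ofReal hle
        _ = ∫⁻ u, ENNReal.ofReal |k (x - u)| ∂(μ n) :=
            ofReal_integral_eq_lintegral_ofReal habs
              (Filter.Eventually.of_forall fun u => abs_nonneg _)
    -- step 2: Cauchy-Schwarz (Hölder with p = q = 2) in ℝ≥0∞
    have h2 : (∫⁻ u, ENNReal.ofReal |k (x - u)| ∂(μ n)) ^ 2
        ≤ A * ENNReal.ofReal D := by
      have hpq : (2:ℝ).HolderConjugate 2 := by
        rw [Real.holderConjugate_iff]; norm_num
      have hp : AEMeasurable
          (fun u => ENNReal.ofReal (|k (x - u)| / Real.sqrt (h (x - u)))) (μ n) := by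
        refine Continuous.aemeasurable ?_
        exact ENNReal.continuous_ofReal.comp
          (((kcont.comp (continuous_const.sub continuous_id)).abs).div
            ((hcont.comp (continuous_const.sub continuous_id)).sqrt)
            (fun u => (Real.sqrt_pos.2 (hpos (x - u))).ne'))
      have hq : AEMeasurable
          (fun u => ENNReal.ofReal (Real.sqrt (h (x - u)))) (μ n) := by
        refine Continuous.aemeasurable ?_
        exact ENNReal.continuous_ofReal.comp
          ((hcont.comp (continuous_const.sub continuous_id)).sqrt)
      have hmul : ∀ u, ENNReal.ofReal (|k (x - u)| / Real.sqrt (h (x - u)))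
          * ENNReal.ofReal (Real.sqrt (h (x - u))) = ENNReal.ofReal |k (x - u)| := by
        intro u
        rw [← ENNReal.ofReal_mul (div_nonneg (abs_nonneg _) (Real.sqrt_nonneg _))]
        congr 1
        exact div_mul_cancel₀ _ (Real.sqrt_pos.2 (hpos (x - u))).ne'
      have hpow1 : ∀ u, ENNReal.ofReal (|k (x - u)| / Real.sqrt (h (x - u))) ^ (2:ℝ)
          = ENNReal.ofReal (k (x - u) ^ 2 / h (x - u)) := by
        intro u
        rw [ENNReal.ofReal_rpow_of_nonneg
          (div_nonneg (abs_nonneg _) (Real.sqrt_nonneg _)) (by norm_num : (0:ℝ) ≤ 2)]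
        congr 1
        rw [show ((2:ℝ)) = ((2:ℕ):ℝ) by norm_num, Real.rpow_natCast]
        rw [div_pow, sq_abs, Real.sq_sqrt (hpos (x - u)).le]
      have hpow2 : ∀ u, ENNReal.ofReal (Real.sqrt (h (x - u))) ^ (2:ℝ)
          = ENNReal.ofReal (h (x - u)) := by
        intro u
        rw [ENNReal.ofReal_rpow_of_nonneg (Real.sqrt_nonneg _) (by norm_num : (0:ℝ) ≤ 2)]
        congr 1
        rw [show ((2:ℝ)) = ((2:ℕ):ℝ) by norm_num, Real.rpow_natCast]
        exact Real.sq_sqrt (hpos (x - u)).le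
      have holder := ENNReal.lintegral_mul_le_Lp_mul_Lq (μ n) hpq hp hq
      simp only [Pi.mul_apply, hmul, hpow1, hpow2] at holder
      rw [hBD, ← hA] at holder
      calc (∫⁻ u, ENNReal.ofReal |k (x - u)| ∂(μ n)) ^ 2
          ≤ (A ^ ((1:ℝ)/2) * ENNReal.ofReal D ^ ((1:ℝ)/2)) ^ 2 := by
            exact pow_le_pow_left' holder 2
        _ = A * ENNReal.ofReal D := by
            rw [mul_pow]
            congr 1 <;>
            · rw [← ENNReal.rpow_natCast (_ ^ ((1:ℝ)/2)) 2, ← ENNReal.rpow_mul]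
              norm_num
    -- combine
    have hF : ENNReal.ofReal (F n x) = ENNReal.ofReal |N| ^ 2 / ENNReal.ofReal D := by
      rw [hFdef]
      simp only [← hN, ← hD]
      rw [ENNReal.ofReal_div_of_pos hDpos, ← sq_abs N,
        ENNReal.ofReal_pow (abs_nonneg _)]
    rw [hF, ENNReal.div_le_iff (by simpa using hDpos) ENNReal.ofReal_ne_top]
    calc ENNReal.ofReal |N| ^ 2
        ≤ (∫⁻ u, ENNReal.ofReal |k (x - u)| ∂(μ n)) ^ 2 := pow_le_pow_left' h1 2
      _ ≤ A * ENNReal.ofReal D := h2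
  -- the majorant integrates to I'
  have Gle : ∀ n, (∫⁻ x, ∫⁻ u, ENNReal.ofReal (k (x - u) ^ 2 / h (x - u)) ∂(μ n)) = I' := by
    intro n
    have Fmeas : AEMeasurable
        (fun p : ℝ × ℝ => ENNReal.ofReal (k (p.1 - p.2) ^ 2 / h (p.1 - p.2)))
        ((volume : Measure ℝ).prod (μ n)) := by
      refine Continuous.aemeasurable ?_
      exact ENNReal.continuous_ofReal.comp
        (qcont.comp (continuous_fst.sub continuous_snd))
    rw [lintegral_lintegral_swap Fmeas]
    have qmeas : Measurable (fun w => ENNReal.ofReal (k w ^ 2 / h w)) :=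
      (ENNReal.continuous_ofReal.comp qcont).measurable
    have htrans : ∀ u : ℝ,
        (∫⁻ x, ENNReal.ofReal (k (x - u) ^ 2 / h (x - u))) = I' := by
      intro u
      exact lintegral_sub_right_eq_self (fun w => ENNReal.ofReal (k w ^ 2 / h w)) u
    simp only [htrans]
    simp
  -- lintegral version of the statement
  set L : ℕ → ℝ≥0∞ := fun n => ∫⁻ x, ENNReal.ofReal (F n x) with hLdef
  have Lmeas : ∀ n, Measurable (fun x => ENNReal.ofReal (F n x)) := fun n =>
    (ENNReal.continuous_ofReal.comp (Fcont n)).measurable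
  have Lle : ∀ n, L n ≤ I' := by
    intro n
    calc L n ≤ ∫⁻ x, ∫⁻ u, ENNReal.ofReal (k (x - u) ^ 2 / h (x - u)) ∂(μ n) :=
          lintegral_mono (CS n)
      _ = I' := Gle n
  have Lliminf : I' ≤ liminf L atTop := by
    have hptw : ∀ x, Tendsto (fun n => ENNReal.ofReal (F n x)) atTop
        (𝓝 (ENNReal.ofReal (k x ^ 2 / h x))) := fun x =>
      (ENNReal.continuous_ofReal.tendsto _).comp (Fptw x)
    calc I' = ∫⁻ x, liminf (fun n => ENNReal.ofReal (F n x)) atTop := by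
          rw [hI'def]
          congr 1
          ext x
          rw [(hptw x).liminf_eq]
      _ ≤ liminf L atTop := lintegral_liminf_le fun n => Lmeas n
  have Ltend : Tendsto L atTop (𝓝 I') := by
    refine tendsto_of_liminf_eq_limsup ?_ ?_ ?_ ?_
    · exact le_antisymm ((liminf_le_limsup).trans
        (limsup_le_of_le (by isBoundedDefault) (Filter.Eventually.of_forall Lle))) Lliminf
    · exact le_antisymm
        (limsup_le_of_le (by isBoundedDefault) (Filter.Eventually.of_forall Lle))
        (Lliminf.trans liminf_le_limsup)
    · isBoundedDefault
    · isBoundedDefault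
  -- convert back to Bochner integrals
  have hrepr : ∀ n, (∫ x, F n x) = (L n).toReal := by
    intro n
    rw [hLdef]
    exact integral_eq_lintegral_of_nonneg_ae
      (Filter.Eventually.of_forall (Fnn n)) (Fcont n).aestronglyMeasurable
  have hreprI : (∫ w, k w ^ 2 / h w) = I'.toReal := by
    rw [hI', ENNReal.toReal_ofReal (integral_nonneg qnn)]
  have : Tendsto (fun n => (L n).toReal) atTop (𝓝 I'.toReal) :=
    (ENNReal.tendsto_toReal hI'ne).comp Ltend
  rw [hreprI]
  have e : (fun n => ∫ x, (∫ u, k (x - u) ∂(μ n)) ^ 2 / (∫ u, h (x - u) ∂(μ n)))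
      = fun n => (L n).toReal := funext hrepr
  rw [e]; exact this
end

section
/- Let h : ℝ → ℝ be a continuous probability density with h(w) > 0 for all w, and let h̆ : ℝ → ℝ be continuous with h̃ := h̆²/h Lebesgue-integrable. Let g be a measurable probability density on ℝ with g(u) > 0 for Lebesgue-almost every u, and suppose there is NO constant λ such that h̆(w) = λ·h(w) for Lebesgue-almost every w. Then ∫ ( ∫ g(u)·h̆(x − u) du )² / ( ∫ g(u)·h(x − u) du ) dx < ∫ h̆(w)²/h(w) dw, with strict inequality. -/
open MeasureTheory Filter Topology

private lemma aux_int_pos {f : ℝ → ℝ} (hf : Integrable f)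
    (h0 : ∀ᵐ u ∂(volume : Measure ℝ), 0 ≤ f u) {s : Set ℝ}
    (hs : 0 < volume s) (hsf : ∀ u ∈ s, 0 < f u) : 0 < ∫ u, f u := by
  refine (integral_pos_iff_support_of_nonneg_ae h0 hf).2 ?_
  exact lt_of_lt_of_le hs (measure_mono fun u hu => (hsf u hu).ne')

private lemma aux_int_pos_ae {f : ℝ → ℝ} (hf : Integrable f)
    (h0 : ∀ᵐ u ∂(volume : Measure ℝ), 0 < f u) : 0 < ∫ u, f u := by
  refine (integral_pos_iff_support_of_nonneg_ae (h0.mono fun u hu => hu.le) hf).2 ?_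
  have hc : volume (Function.support f)ᶜ = 0 := by
    refine measure_mono_null (fun u hu => ?_) (ae_iff.1 h0)
    simp only [Function.mem_support, Set.mem_compl_iff, not_not] at hu
    simp [hu]
  by_contra hle
  push_neg at hle
  have h0' : volume (Function.support f) = 0 := le_antisymm hle bot_le
  have := measure_union_le (μ := (volume : Measure ℝ)) (Function.support f)
    (Function.support f)ᶜ
  rw [Set.union_compl_self, hc, h0'] at this
  simp [Real.volume_univ] at this

/-- Key step of Theorem 4.2(c): convolving with a genuine density g strictly decreases the
Fisher-type information, provided the score k is not a.e. proportional to the density h. -/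
theorem stmt_9 (h k : ℝ → ℝ) (hcont : Continuous h) (hpos : ∀ w, 0 < h w)
    (hdens : ∫ w, h w = 1) (kcont : Continuous k)
    (hfin : Integrable (fun w => k w ^ 2 / h w))
    (g : ℝ → ℝ) (hg : Measurable g) (hgpos : ∀ᵐ u ∂(volume : Measure ℝ), 0 < g u)
    (hgdens : ∫ u, g u = 1)
    (hnp : ¬ ∃ lam : ℝ, k =ᵐ[volume] fun w => lam * h w) :
    ∫ x, (∫ u, g u * k (x - u)) ^ 2 / (∫ u, g u * h (x - u))
      < ∫ w, k w ^ 2 / h w := by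
  set q : ℝ → ℝ := fun w => k w ^ 2 / h w with hq_def
  have hq : Integrable q := hfin
  -- integrability of g, h, k
  have hgint : Integrable g := by
    by_contra hc; rw [integral_undef hc] at hgdens; norm_num at hgdens
  have hhint : Integrable h := by
    by_contra hc; rw [integral_undef hc] at hdens; norm_num at hdens
  have hkint : Integrable k := by
    refine (hq.add hhint).mono' kcont.aestronglyMeasurable
      (Eventually.of_forall fun w => ?_)
    have hw := hpos w
    show |k w| ≤ q w + h w
    show |k w| ≤ k w ^ 2 / h w + h w
    rw [div_add' _ _ _ hw.ne', le_div_iff₀ hw]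
    nlinarith [sq_abs (k w), sq_nonneg (|k w| - h w), abs_nonneg (k w)]
  -- product integrability
  set L := ContinuousLinearMap.mul ℝ ℝ with hL
  have Pq : Integrable (fun p : ℝ × ℝ => g p.2 * q (p.1 - p.2))
      ((volume : Measure ℝ).prod volume) := by
    simpa [hL, ContinuousLinearMap.mul_apply'] using hgint.convolution_integrand L hq
  have Pk : Integrable (fun p : ℝ × ℝ => g p.2 * k (p.1 - p.2))
      ((volume : Measure ℝ).prod volume) := by
    simpa [hL, ContinuousLinearMap.mul_apply'] using hgint.convolution_integrand L hkint
  have Ph : Integrable (fun p : ℝ × ℝ => g p.2 * h (p.1 - p.2))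
      ((volume : Measure ℝ).prod volume) := by
    simpa [hL, ContinuousLinearMap.mul_apply'] using hgint.convolution_integrand L hhint
  set K : ℝ → ℝ := fun x => ∫ u, g u * k (x - u) with hK_def
  set H : ℝ → ℝ := fun x => ∫ u, g u * h (x - u) with hH_def
  set Φ : ℝ → ℝ := fun x => ∫ u, g u * q (x - u) with hΦ_def
  have KInt : Integrable K := Pk.integral_prod_left
  have HInt : Integrable H := Ph.integral_prod_left
  have ΦInt : Integrable Φ := Pq.integral_prod_left
  -- ∫ Φ = ∫ q
  have hΦeq : ∫ x, Φ x = ∫ w, q w := by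
    have hconv := integral_convolution L hgint hq
    rw [hgdens] at hconv
    simp only [convolution_def, hL, ContinuousLinearMap.mul_apply'] at hconv
    simpa using hconv
  -- a.e. slice integrability
  have aeK := Pk.prod_right_ae
  have aeH := Ph.prod_right_ae
  have aeQ := Pq.prod_right_ae
  -- key pointwise strict inequality
  have key : ∀ᵐ x ∂(volume : Measure ℝ),
      0 ≤ K x ^ 2 / H x ∧ K x ^ 2 / H x < Φ x := by
    filter_upwards [aeK, aeH, aeQ] with x hKx hHx hQx
    have hHpos : 0 < H x := by
      refine aux_int_pos_ae hHx ?_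
      filter_upwards [hgpos] with u hu
      exact mul_pos hu (hpos _)
    set lam : ℝ := K x / H x with hlam
    -- there exists a point of non-proportionality
    have hv : ∃ v, k v ≠ lam * h v := by
      by_contra hcon; push_neg at hcon
      exact hnp ⟨lam, Eventually.of_forall hcon⟩
    obtain ⟨v, hv⟩ := hv
    set d : ℝ → ℝ := fun u => g u * ((k (x - u) - lam * h (x - u)) ^ 2 / h (x - u))
      with hd_def
    have hd_eq : d = fun u => (g u * q (x - u) - 2 * lam * (g u * k (x - u)))
        + lam ^ 2 * (g u * h (x - u)) := by
      funext u
      have hxu := hpos (x - u)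
      simp only [hd_def, hq_def]
      field_simp
      ring
    have hd_int : Integrable d := by
      rw [hd_eq]
      exact (hQx.sub (hKx.const_mul _)).add (hHx.const_mul _)
    have hd_nonneg : ∀ᵐ u ∂(volume : Measure ℝ), 0 ≤ d u := by
      filter_upwards [hgpos] with u hu
      have := hpos (x - u)
      positivity
    -- the set where strict positivity holds
    have hs_open : IsOpen {u : ℝ | k (x - u) ≠ lam * h (x - u)} := by
      have : {u : ℝ | k (x - u) ≠ lam * h (x - u)} =
          (fun u => k (x - u) - lam * h (x - u)) ⁻¹' {0}ᶜ := by
        ext u; simp [sub_eq_zero]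
      rw [this]
      exact (isClosed_singleton.preimage
        ((kcont.comp (continuous_const.sub continuous_id)).sub
          (continuous_const.mul (hcont.comp (continuous_const.sub continuous_id))))).isOpen_compl
    have hs_ne : (x - v) ∈ {u : ℝ | k (x - u) ≠ lam * h (x - u)} := by
      simp only [Set.mem_setOf_eq, sub_sub_cancel]
      exact hv
    -- ∫ d > 0
    have hgnull : volume {u : ℝ | ¬ 0 < g u} = 0 := ae_iff.1 hgpos
    have hspos : 0 < volume ({u : ℝ | k (x - u) ≠ lam * h (x - u)} ∩ {u | 0 < g u}) := by
      have h1 : 0 < volume {u : ℝ | k (x - u) ≠ lam * h (x - u)} :=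
        hs_open.measure_pos (volume : Measure ℝ) ⟨x - v, hs_ne⟩
      by_contra hle
      push_neg at hle
      have h0' : volume ({u : ℝ | k (x - u) ≠ lam * h (x - u)} ∩ {u | 0 < g u}) = 0 :=
        le_antisymm hle bot_le
      have hsub : {u : ℝ | k (x - u) ≠ lam * h (x - u)} ⊆
          ({u : ℝ | k (x - u) ≠ lam * h (x - u)} ∩ {u | 0 < g u}) ∪ {u : ℝ | ¬ 0 < g u} := by
        intro u hu
        by_cases hgu : 0 < g u
        · exact Or.inl ⟨hu, hgu⟩
        · exact Or.inr hgu
      have hle2 : volume {u : ℝ | k (x - u) ≠ lam * h (x - u)} ≤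
          volume (({u : ℝ | k (x - u) ≠ lam * h (x - u)} ∩ {u | 0 < g u}))
            + volume {u : ℝ | ¬ 0 < g u} :=
        (measure_mono hsub).trans (measure_union_le _ _)
      rw [h0', hgnull] at hle2
      simp at hle2
      exact h1.ne' hle2
    have hd_pos_int : 0 < ∫ u, d u := by
      refine aux_int_pos hd_int hd_nonneg hspos fun u hu => ?_
      obtain ⟨hu1, hu2⟩ := hu
      have h1 : 0 < (k (x - u) - lam * h (x - u)) ^ 2 / h (x - u) := by
        apply div_pos _ (hpos _)
        have : k (x - u) - lam * h (x - u) ≠ 0 := sub_ne_zero.2 hu1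
        positivity
      exact mul_pos hu2 h1
    -- compute ∫ d
    have hd_val : ∫ u, d u = Φ x - 2 * lam * K x + lam ^ 2 * H x := by
      have i2 : Integrable (fun u => lam ^ 2 * (g u * h (x - u))) volume :=
        hHx.const_mul _
      have i3 : Integrable (fun u => 2 * lam * (g u * k (x - u))) volume :=
        hKx.const_mul _
      have i1 : Integrable
          (fun u => g u * q (x - u) - 2 * lam * (g u * k (x - u))) volume :=
        hQx.sub i3
      simp only [hd_eq]
      rw [integral_add i1 i2, integral_sub hQx i3, integral_const_mul, integral_const_mul]
    have hiden : K x ^ 2 / H x = 2 * lam * K x - lam ^ 2 * H x := by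
      rw [hlam]
      field_simp
      ring
    constructor
    · exact div_nonneg (sq_nonneg _) hHpos.le
    · rw [hiden]; rw [hd_val] at hd_pos_int; linarith
  -- integrability of the LHS integrand
  set f : ℝ → ℝ := fun x => K x ^ 2 / H x with hf_def
  have hf_meas : AEStronglyMeasurable f volume := by
    have : f = fun x => (K x * K x) / H x := by funext x; rw [hf_def]; ring_nf
    rw [this]
    exact ((KInt.aestronglyMeasurable.aemeasurable.mul
      KInt.aestronglyMeasurable.aemeasurable).div
      HInt.aestronglyMeasurable.aemeasurable).aestronglyMeasurable
  have fInt : Integrable f := by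
    refine ΦInt.mono' hf_meas ?_
    filter_upwards [key] with x hx
    rw [Real.norm_eq_abs, abs_of_nonneg hx.1]
    exact hx.2.le
  have hdiff : 0 < ∫ x, (Φ x - f x) := by
    refine aux_int_pos_ae (ΦInt.sub fInt) ?_
    filter_upwards [key] with x hx
    exact sub_pos.2 hx.2
  rw [integral_sub ΦInt fInt] at hdiff
  have : ∫ x, f x < ∫ w, q w := by rw [← hΦeq]; linarith
  exact this
end

section
/- Let 0 < α < β, let η > 0 and C > 0, and let h : ℝ → [0,∞) be a measurable probability density with h(x) ≤ C·min(1, |x|^{−(1+β)}) for all x ≠ 0. Define D_η(x) = ∫_{{y : |y| > η}} h(x − y)·|y|^{−(1+α)} dy. Then |x|^{1+α}·D_η(x) → 1 as |x| → ∞. -/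
open MeasureTheory Filter Topology

/-- Eq. (equivD) in the proof of Theorem 5.4: convolving a density with β-stable-like
tails against the truncated kernel |y|^{-(1+α)} gives a function equivalent to
|x|^{-(1+α)} at infinity. -/
theorem stmt_13 (α β η C : ℝ) (hα : 0 < α) (hαβ : α < β) (hη : 0 < η) (hC : 0 < C)
    (h : ℝ → ℝ) (hm : Measurable h) (hnn : ∀ x, 0 ≤ h x) (hdens : ∫ x, h x = 1)
    (hbound : ∀ x : ℝ, x ≠ 0 → h x ≤ C * min 1 (|x| ^ (-(1 + β)))) :
    Tendsto (fun x : ℝ =>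
        |x| ^ (1 + α) * ∫ y in {y : ℝ | η < |y|}, h (x - y) * |y| ^ (-(1 + α)))
      (cocompact ℝ) (𝓝 1) := by
  have hp : -(1 + α) < -1 := by linarith
  haveI : (cocompact ℝ).IsCountablyGenerated := by
    rw [cocompact_eq_atBot_atTop]; infer_instance
  set S : Set ℝ := {w : ℝ | η < |w|} with hSdef
  have hSmeas : MeasurableSet S := (isOpen_lt continuous_const continuous_abs).measurableSet
  set k : ℝ → ℝ := S.indicator (fun w => |w| ^ (-(1 + α))) with hkdef
  have hrpow_meas : Measurable fun w : ℝ => |w| ^ (-(1 + α)) := by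
    have e : (fun w : ℝ => |w| ^ (-(1 + α))) =
        fun w => if w = 0 then 0 else Real.exp (Real.log |w| * (-(1 + α))) := by
      funext w
      by_cases hw : w = 0
      · rw [hw, abs_zero, Real.zero_rpow (show -(1 + α) ≠ 0 by linarith), if_pos rfl]
      · rw [if_neg hw, Real.rpow_def_of_pos (abs_pos.mpr hw)]
    rw [e]
    exact Measurable.ite (by simpa using measurableSet_singleton (0:ℝ)) measurable_const
      (Real.measurable_exp.comp ((Real.measurable_log.comp measurable_abs).mul
        measurable_const))
  have hk_meas : Measurable k := hrpow_meas.indicator hSmeas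
  have hk_nonneg : ∀ w, 0 ≤ k w := fun w =>
    Set.indicator_nonneg (fun w _ => Real.rpow_nonneg (abs_nonneg w) _) w
  have hk_bdd : ∀ w, k w ≤ η ^ (-(1 + α)) := by
    intro w
    by_cases hw : w ∈ S
    · rw [hkdef, Set.indicator_of_mem hw]
      exact Real.rpow_le_rpow_of_nonpos hη (le_of_lt hw) (by linarith)
    · rw [hkdef, Set.indicator_of_notMem hw]
      exact Real.rpow_nonneg hη.le _
  -- integrability of the kernel
  have hk_int : Integrable k := by
    have hIoi : IntegrableOn (fun w : ℝ => |w| ^ (-(1 + α))) (Set.Ioi η) :=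
      (integrableOn_Ioi_rpow_of_lt hp hη).congr_fun
        (fun w hw => by rw [abs_of_pos (hη.trans hw)]) measurableSet_Ioi
    have hIio : IntegrableOn (fun w : ℝ => |w| ^ (-(1 + α))) (Set.Iio (-η)) := by
      have key := (MeasurePreserving.integrableOn_comp_preimage
        (Measure.measurePreserving_neg (volume : Measure ℝ))
        (Homeomorph.neg ℝ).measurableEmbedding).2 hIoi
      have h1 : ((fun w : ℝ => |w| ^ (-(1 + α))) ∘ Neg.neg) =
          fun w : ℝ => |w| ^ (-(1 + α)) := by
        funext w; simp [Function.comp, abs_neg]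
      have h2 : (Neg.neg ⁻¹' Set.Ioi η : Set ℝ) = Set.Iio (-η) := by
        ext w
        simp only [Set.mem_preimage, Set.mem_Ioi, Set.mem_Iio]
        constructor <;> intro hw <;> linarith
      rwa [h1, h2] at key
    have hset : S = Set.Iio (-η) ∪ Set.Ioi η := by
      ext w
      simp only [hSdef, Set.mem_setOf_eq, Set.mem_union, Set.mem_Iio, Set.mem_Ioi, lt_abs]
      constructor
      · rintro (hw | hw)
        · exact Or.inr hw
        · exact Or.inl (by linarith)
      · rintro (hw | hw)
        · exact Or.inr (by linarith)
        · exact Or.inl hw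
    have hSint : IntegrableOn (fun w : ℝ => |w| ^ (-(1 + α))) S := by
      rw [hset]; exact hIio.union hIoi
    exact hSint.integrable_indicator hSmeas
  -- h is integrable
  have hh_int : Integrable h := by
    by_contra hcon
    rw [integral_undef hcon] at hdens
    norm_num at hdens
  -- |x| tends to infinity along cocompact
  have habs : Tendsto (fun x : ℝ => |x|) (cocompact ℝ) atTop := by
    exact (tendsto_norm_cocompact_atTop (E := ℝ)).congr (fun x => Real.norm_eq_abs x)
  set G : ℝ → ℝ → ℝ := fun x z => h z * (|x| ^ (1 + α) * k (x - z)) with hGdef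
  set A : ℝ → Set ℝ := fun x => {z : ℝ | |z| ≤ |x| / 2} with hAdef
  have hAmeas : ∀ x, MeasurableSet (A x) := fun x =>
    (isClosed_le continuous_abs continuous_const).measurableSet
  -- change of variables
  have key : ∀ x : ℝ,
      |x| ^ (1 + α) * ∫ y in S, h (x - y) * |y| ^ (-(1 + α)) = ∫ z, G x z := by
    intro x
    have e1 : (∫ y in S, h (x - y) * |y| ^ (-(1 + α))) = ∫ y, h (x - y) * k y := by
      rw [← integral_indicator hSmeas]
      congr 1
      funext y
      by_cases hy : y ∈ S
      · rw [Set.indicator_of_mem hy, hkdef, Set.indicator_of_mem hy]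
      · rw [Set.indicator_of_notMem hy, hkdef, Set.indicator_of_notMem hy, mul_zero]
    have e2 : (∫ y, h (x - y) * k y) = ∫ z, h z * k (x - z) := by
      rw [← integral_sub_left_eq_self (fun y => h (x - y) * k y) volume x]
      congr 1; funext z; rw [sub_sub_cancel]
    rw [e1, e2, ← integral_const_mul]
    simp only [hGdef]
    congr 1; funext z; ring
  have hkx_meas : ∀ x : ℝ, Measurable (fun z => k (x - z)) := fun x =>
    hk_meas.comp (measurable_const.sub measurable_id)
  have hG_meas : ∀ x, Measurable (G x) := fun x =>
    hm.mul ((hkx_meas x).const_mul _)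
  have hG_nonneg : ∀ x z, 0 ≤ G x z := fun x z =>
    mul_nonneg (hnn z) (mul_nonneg (Real.rpow_nonneg (abs_nonneg x) _) (hk_nonneg _))
  have hG_int : ∀ x, Integrable (G x) := by
    intro x
    have hbm : Integrable (fun z => (|x| ^ (1 + α) * k (x - z)) * h z) :=
      hh_int.bdd_mul (((hkx_meas x).const_mul _).aestronglyMeasurable)
        (c := |x| ^ (1 + α) * η ^ (-(1 + α))) (Filter.Eventually.of_forall fun z => by
          rw [Real.norm_eq_abs, abs_of_nonneg
            (mul_nonneg (Real.rpow_nonneg (abs_nonneg x) _) (hk_nonneg _))]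
          exact mul_le_mul_of_nonneg_left (hk_bdd _) (Real.rpow_nonneg (abs_nonneg x) _))
    exact hbm.congr (Filter.Eventually.of_forall fun z => by
      simp only [hGdef]; ring)
  have hsplit : ∀ x : ℝ, (∫ z, G x z) =
      (∫ z, (A x).indicator (G x) z) + ∫ z, ((A x)ᶜ).indicator (G x) z := by
    intro x
    rw [← integral_add ((hG_int x).indicator (hAmeas x)) ((hG_int x).indicator (hAmeas x).compl)]
    congr 1
    funext z
    exact congrFun (Set.indicator_self_add_compl (A x) (G x)).symm z
  -- first piece tends to 1
  have hterm1 : Tendsto (fun x => ∫ z, (A x).indicator (G x) z) (cocompact ℝ) (𝓝 1) := by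
    have main : Tendsto (fun x => ∫ z, (A x).indicator (G x) z) (cocompact ℝ)
        (𝓝 (∫ z, h z)) := by
      apply tendsto_integral_filter_of_dominated_convergence (f := h)
        (bound := fun z => 2 ^ (1 + α) * h z)
      · exact Filter.Eventually.of_forall fun x =>
          ((hG_meas x).indicator (hAmeas x)).aestronglyMeasurable
      · filter_upwards [habs.eventually (eventually_gt_atTop (2 * η))] with x hx
        refine Filter.Eventually.of_forall fun z => ?_
        by_cases hz : z ∈ A x
        · have hzA : |z| ≤ |x| / 2 := hz
          have h2 : |x| / 2 ≤ |x - z| := by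
            have := abs_sub_abs_le_abs_sub x z
            linarith
          have hxz : x - z ∈ S := by
            have : η < |x - z| := by linarith
            exact this
          have hkx : k (x - z) = |x - z| ^ (-(1 + α)) := by
            rw [hkdef]; exact Set.indicator_of_mem hxz _
          have hr : |x| ^ (1 + α) * k (x - z) ≤ 2 ^ (1 + α) := by
            rw [hkx, Real.rpow_neg (abs_nonneg _), ← div_eq_mul_inv,
              div_le_iff₀ (Real.rpow_pos_of_pos (by linarith : (0:ℝ) < |x - z|) _)]
            calc |x| ^ (1 + α) ≤ (2 * |x - z|) ^ (1 + α) :=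
                Real.rpow_le_rpow (abs_nonneg x) (by linarith) (by linarith)
              _ = 2 ^ (1 + α) * |x - z| ^ (1 + α) :=
                Real.mul_rpow (by norm_num) (abs_nonneg _)
          rw [Set.indicator_of_mem hz, Real.norm_eq_abs, abs_of_nonneg (hG_nonneg x z)]
          calc G x z = h z * (|x| ^ (1 + α) * k (x - z)) := rfl
            _ ≤ h z * 2 ^ (1 + α) := mul_le_mul_of_nonneg_left hr (hnn z)
            _ = 2 ^ (1 + α) * h z := mul_comm _ _
        · rw [Set.indicator_of_notMem hz, norm_zero]
          have : (0:ℝ) ≤ 2 ^ (1 + α) := Real.rpow_nonneg (by norm_num) _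
          exact mul_nonneg this (hnn z)
      · exact hh_int.const_mul _
      · refine Filter.Eventually.of_forall fun z => ?_
        have hsub : Tendsto (fun x : ℝ => |x - z|) (cocompact ℝ) atTop := by
          apply tendsto_atTop_mono (fun x => ?_)
            (tendsto_atTop_add_const_right _ (-|z|) habs)
          have := abs_sub_abs_le_abs_sub x z
          linarith
        have hinv0 : Tendsto (fun x : ℝ => (x - z)⁻¹) (cocompact ℝ) (𝓝 0) := by
          rw [tendsto_zero_iff_norm_tendsto_zero]
          exact hsub.inv_tendsto_atTop.congr (fun x => by rw [Pi.inv_apply, Real.norm_eq_abs, abs_inv])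
        have hfrac : Tendsto (fun x : ℝ => x / (x - z)) (cocompact ℝ) (𝓝 1) := by
          have h1 : Tendsto (fun x : ℝ => 1 + z * (x - z)⁻¹) (cocompact ℝ) (𝓝 1) := by
            have := (hinv0.const_mul z).const_add (1:ℝ)
            simpa using this
          apply h1.congr'
          filter_upwards [habs.eventually (eventually_gt_atTop |z|)] with x hx
          have hxz : x - z ≠ 0 := sub_ne_zero.mpr (by rintro rfl; exact lt_irrefl _ hx)
          field_simp
          ring
        have hratio : Tendsto (fun x : ℝ => |x| * |x - z|⁻¹) (cocompact ℝ) (𝓝 1) := by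
          have hfun : (fun x : ℝ => |x| * |x - z|⁻¹) = fun x : ℝ => |x / (x - z)| := by
            funext x; rw [abs_div, div_eq_mul_inv]
          rw [hfun]
          simpa using hfrac.abs
        have hrp : Tendsto (fun x : ℝ => (|x| * |x - z|⁻¹) ^ (1 + α)) (cocompact ℝ)
            (𝓝 1) := by
          have := hratio.rpow_const (p := 1 + α) (Or.inr (by linarith))
          simpa using this
        have hlim : Tendsto (fun x : ℝ => h z * (|x| * |x - z|⁻¹) ^ (1 + α))
            (cocompact ℝ) (𝓝 (h z)) := by
          simpa using hrp.const_mul (h z)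
        refine hlim.congr' ?_
        filter_upwards [habs.eventually (eventually_gt_atTop (max (2 * η) (2 * |z|)))]
          with x hx
        have hx1 : 2 * η < |x| := lt_of_le_of_lt (le_max_left _ _) hx
        have hx2 : 2 * |z| < |x| := lt_of_le_of_lt (le_max_right _ _) hx
        have hzA : z ∈ A x := by
          show |z| ≤ |x| / 2
          linarith
        have h2 : |x| / 2 ≤ |x - z| := by
          have := abs_sub_abs_le_abs_sub x z
          linarith
        have hxz : x - z ∈ S := by
          have : η < |x - z| := by linarith
          exact this
        have hkx : k (x - z) = |x - z| ^ (-(1 + α)) := by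
          rw [hkdef]; exact Set.indicator_of_mem hxz _
        rw [Set.indicator_of_mem hzA]
        show h z * (|x| * |x - z|⁻¹) ^ (1 + α) = h z * (|x| ^ (1 + α) * k (x - z))
        rw [hkx]
        congr 1
        rw [Real.mul_rpow (abs_nonneg x) (inv_nonneg.mpr (abs_nonneg _)),
          Real.inv_rpow (abs_nonneg _), ← Real.rpow_neg (abs_nonneg _)]
    rwa [hdens] at main
  -- constants
  set K : ℝ := ∫ w, k w with hKdef
  have hkint_x : ∀ x : ℝ, Integrable (fun z => k (x - z)) := fun x => hk_int.comp_sub_left x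
  have hkint_eq : ∀ x : ℝ, (∫ z, k (x - z)) = K := fun x =>
    integral_sub_left_eq_self k volume x
  -- second piece tends to 0
  have hterm2 : Tendsto (fun x => ∫ z, ((A x)ᶜ).indicator (G x) z) (cocompact ℝ) (𝓝 0) := by
    have hg0 : Tendsto (fun x : ℝ => C * 2 ^ (1 + β) * K * |x| ^ (α - β))
        (cocompact ℝ) (𝓝 0) := by
      have h1 : Tendsto (fun x : ℝ => |x| ^ (α - β)) (cocompact ℝ) (𝓝 0) := by
        have := (tendsto_rpow_neg_atTop (by linarith : (0:ℝ) < β - α)).comp habs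
        have he : (fun x : ℝ => |x| ^ (-(β - α))) = fun x : ℝ => |x| ^ (α - β) := by
          funext x; congr 1; ring
        rw [← he]
        exact this
      simpa using h1.const_mul (C * 2 ^ (1 + β) * K)
    apply squeeze_zero_norm' _ hg0
    filter_upwards [habs.eventually (eventually_gt_atTop (2 * η))] with x hx1
    have hx0 : 0 < |x| := by linarith
    have hmaj : ∀ z, ‖((A x)ᶜ).indicator (G x) z‖ ≤
        (C * (|x| / 2) ^ (-(1 + β)) * |x| ^ (1 + α)) * k (x - z) := by
      intro z
      by_cases hz : z ∈ (A x)ᶜ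
      · rw [Set.indicator_of_mem hz, Real.norm_eq_abs, abs_of_nonneg (hG_nonneg x z)]
        have hz2 : |x| / 2 < |z| := by
          have : ¬ (|z| ≤ |x| / 2) := hz
          linarith [not_le.mp this]
        have hz0 : z ≠ 0 := by
          intro hh
          rw [hh, abs_zero] at hz2
          linarith
        have hhz : h z ≤ C * (|x| / 2) ^ (-(1 + β)) := by
          calc h z ≤ C * min 1 (|z| ^ (-(1 + β))) := hbound z hz0
            _ ≤ C * |z| ^ (-(1 + β)) :=
              mul_le_mul_of_nonneg_left (min_le_right _ _) hC.le
            _ ≤ C * (|x| / 2) ^ (-(1 + β)) :=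
              mul_le_mul_of_nonneg_left
                (Real.rpow_le_rpow_of_nonpos (by linarith) hz2.le (by linarith)) hC.le
        calc G x z = h z * (|x| ^ (1 + α) * k (x - z)) := rfl
          _ ≤ (C * (|x| / 2) ^ (-(1 + β))) * (|x| ^ (1 + α) * k (x - z)) :=
            mul_le_mul_of_nonneg_right hhz
              (mul_nonneg (Real.rpow_nonneg (abs_nonneg x) _) (hk_nonneg _))
          _ = (C * (|x| / 2) ^ (-(1 + β)) * |x| ^ (1 + α)) * k (x - z) := by ring
      · rw [Set.indicator_of_notMem hz, norm_zero]
        have h1 : (0:ℝ) ≤ C * (|x| / 2) ^ (-(1 + β)) * |x| ^ (1 + α) := by positivity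
        exact mul_nonneg h1 (hk_nonneg _)
    have hb := norm_integral_le_of_norm_le ((hkint_x x).const_mul _)
      (Filter.Eventually.of_forall hmaj)
    have e1 : ((|x| / 2 : ℝ)) ^ (-(1 + β)) = |x| ^ (-(1 + β)) * 2 ^ (1 + β) := by
      rw [Real.div_rpow (abs_nonneg x) (by norm_num : (0:ℝ) ≤ 2),
        Real.rpow_neg (by norm_num : (0:ℝ) ≤ 2), div_eq_mul_inv, inv_inv]
    have e2 : |x| ^ (-(1 + β)) * |x| ^ (1 + α) = |x| ^ (α - β) := by
      rw [← Real.rpow_add hx0]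
      congr 1; ring
    calc ‖∫ z, ((A x)ᶜ).indicator (G x) z‖
        ≤ ∫ z, (C * (|x| / 2) ^ (-(1 + β)) * |x| ^ (1 + α)) * k (x - z) := hb
      _ = (C * (|x| / 2) ^ (-(1 + β)) * |x| ^ (1 + α)) * K := by
          rw [integral_const_mul, hkint_eq]
      _ = C * 2 ^ (1 + β) * K * (|x| ^ (-(1 + β)) * |x| ^ (1 + α)) := by
          rw [e1]; ring
      _ = C * 2 ^ (1 + β) * K * |x| ^ (α - β) := by rw [e2]
  -- assemble
  have hsum : Tendsto (fun x =>
      (∫ z, (A x).indicator (G x) z) + ∫ z, ((A x)ᶜ).indicator (G x) z)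
      (cocompact ℝ) (𝓝 1) := by
    simpa using hterm1.add hterm2
  exact hsum.congr fun x => by rw [← hsplit x, ← key x]
end

section
/- Let α, β, a, b, Γ be positive reals with 2α < β. Then lim_{u→0⁺} u^{α(β−2α)/(β−α)} · ∫_{{x : |x| > Γ}} dx / ( a·|x|^{1+2α−β} + b·u^α·|x|^{1+α} ) = ∫_ℝ dz / ( a·|z|^{1+2α−β} + b·|z|^{1+α} ), and the limit integral is finite. -/
open MeasureTheory Filter Topology Set Pointwise

lemma meas_abs_rpow' (p : ℝ) : Measurable fun x : ℝ => |x| ^ p := by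
  have h : (fun x : ℝ => |x| ^ p)
      = fun x => if x = 0 then (0:ℝ) ^ p else Real.exp (Real.log |x| * p) := by
    funext x
    by_cases hx : x = 0
    · simp [hx]
    · rw [if_neg hx, Real.rpow_def_of_pos (abs_pos.mpr hx)]
  rw [h]
  exact Measurable.ite (measurableSet_singleton 0) measurable_const
    (Real.measurable_exp.comp ((Real.measurable_log.comp measurable_abs).mul_const p))

lemma integrableOn_comp_neg' {f : ℝ → ℝ} {s : Set ℝ}
    (h : IntegrableOn f s) (hsymm : ∀ x, f (-x) = f x) :
    IntegrableOn f (Neg.neg ⁻¹' s) := by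
  have hmap : (volume.restrict (Neg.neg ⁻¹' s)).map Neg.neg = volume.restrict s := by
    conv_rhs => rw [← Measure.map_neg_eq_self (volume : Measure ℝ),
      measurableEmbedding_neg.restrict_map]
  have h1 : Integrable f ((volume.restrict (Neg.neg ⁻¹' s)).map Neg.neg) := hmap ▸ h
  have h2 := measurableEmbedding_neg.integrable_map_iff.mp h1
  have h3 : (f ∘ Neg.neg) = f := funext fun x => hsymm x
  rwa [h3] at h2

lemma integrable_aux' {α β a b : ℝ} (hα : 0 < α) (hβ : 2 * α < β) (ha : 0 < a) (hb : 0 < b) :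
    Integrable (fun z : ℝ => (a * |z| ^ (1 + 2 * α - β) + b * |z| ^ (1 + α))⁻¹) := by
  set p := 1 + 2 * α - β with hp
  set q := 1 + α with hq
  set f : ℝ → ℝ := fun z => (a * |z| ^ p + b * |z| ^ q)⁻¹ with hfdef
  have hmeas : Measurable f :=
    (((meas_abs_rpow' p).const_mul a).add ((meas_abs_rpow' q).const_mul b)).inv
  have hfnn : ∀ z, 0 ≤ f z := by
    intro z
    apply inv_nonneg.mpr
    have h1 : (0:ℝ) ≤ |z| ^ p := Real.rpow_nonneg (abs_nonneg z) p
    have h2 : (0:ℝ) ≤ |z| ^ q := Real.rpow_nonneg (abs_nonneg z) q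
    nlinarith
  have hb1 : ∀ z : ℝ, z ≠ 0 → f z ≤ a⁻¹ * |z| ^ (-p) := by
    intro z hz
    have h1 : 0 < a * |z| ^ p := mul_pos ha (Real.rpow_pos_of_pos (abs_pos.mpr hz) p)
    have h2 : a * |z| ^ p ≤ a * |z| ^ p + b * |z| ^ q := by
      have : (0:ℝ) ≤ b * |z| ^ q :=
        mul_nonneg hb.le (Real.rpow_nonneg (abs_nonneg z) q)
      linarith
    calc f z ≤ (a * |z| ^ p)⁻¹ := inv_anti₀ h1 h2
    _ = a⁻¹ * |z| ^ (-p) := by rw [mul_inv, ← Real.rpow_neg (abs_nonneg z)]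
  have hb2 : ∀ z : ℝ, z ≠ 0 → f z ≤ b⁻¹ * |z| ^ (-q) := by
    intro z hz
    have h1 : 0 < b * |z| ^ q := mul_pos hb (Real.rpow_pos_of_pos (abs_pos.mpr hz) q)
    have h2 : b * |z| ^ q ≤ a * |z| ^ p + b * |z| ^ q := by
      have : (0:ℝ) ≤ a * |z| ^ p :=
        mul_nonneg ha.le (Real.rpow_nonneg (abs_nonneg z) p)
      linarith
    calc f z ≤ (b * |z| ^ q)⁻¹ := inv_anti₀ h1 h2
    _ = b⁻¹ * |z| ^ (-q) := by rw [mul_inv, ← Real.rpow_neg (abs_nonneg z)]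
  have I1 : IntegrableOn f (Ioc (0:ℝ) 1) := by
    have hmaj : IntegrableOn (fun x : ℝ => a⁻¹ * x ^ (-p)) (Ioc (0:ℝ) 1) := by
      have h := (intervalIntegral.intervalIntegrable_rpow'
        (show (-1:ℝ) < -p by rw [hp]; linarith) (a := 0) (b := 1)).const_mul a⁻¹
      rwa [intervalIntegrable_iff_integrableOn_Ioc_of_le zero_le_one] at h
    refine hmaj.mono' hmeas.aestronglyMeasurable.restrict ?_
    rw [ae_restrict_iff' measurableSet_Ioc]
    refine ae_of_all _ fun x hx => ?_
    rw [Real.norm_eq_abs, abs_of_nonneg (hfnn x)]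
    have := hb1 x (ne_of_gt hx.1)
    rwa [abs_of_pos hx.1] at this
  have I2 : IntegrableOn f (Ioi (1:ℝ)) := by
    have hmaj : IntegrableOn (fun x : ℝ => b⁻¹ * x ^ (-q)) (Ioi (1:ℝ)) :=
      (integrableOn_Ioi_rpow_of_lt (show -q < -1 by rw [hq]; linarith) zero_lt_one).const_mul b⁻¹
    refine hmaj.mono' hmeas.aestronglyMeasurable.restrict ?_
    rw [ae_restrict_iff' measurableSet_Ioi]
    refine ae_of_all _ fun x hx => ?_
    have hx0 : (0:ℝ) < x := lt_trans zero_lt_one hx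
    rw [Real.norm_eq_abs, abs_of_nonneg (hfnn x)]
    have := hb2 x (ne_of_gt hx0)
    rwa [abs_of_pos hx0] at this
  have IoiU : IntegrableOn f (Ioi (0:ℝ)) := by
    have h := I1.union I2
    rwa [Ioc_union_Ioi_eq_Ioi zero_le_one] at h
  have IciU : IntegrableOn f (Ici (0:ℝ)) :=
    (integrableOn_Ici_iff_integrableOn_Ioi).mpr IoiU
  have IiiU : IntegrableOn f (Iio (0:ℝ)) := by
    have h := integrableOn_comp_neg' IoiU (fun x => by simp [hfdef, abs_neg])
    have hset : (Neg.neg ⁻¹' Ioi (0:ℝ)) = Iio 0 := by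
      ext x; simp [neg_pos]
    rwa [hset] at h
  rw [← integrableOn_univ, ← Iio_union_Ici (a := (0:ℝ))]
  exact IiiU.union IciU

/-- Scaling limit establishing the case β < 2, α < β/2 of Theorem 5.4 (eq. SS4). -/
theorem stmt_14 (α β a b Γ : ℝ) (hα : 0 < α) (hβ : 2 * α < β)
    (ha : 0 < a) (hb : 0 < b) (hΓ : 0 < Γ) :
    Integrable (fun z : ℝ => (a * |z| ^ (1 + 2 * α - β) + b * |z| ^ (1 + α))⁻¹) ∧
    Tendsto (fun u : ℝ => u ^ (α * (β - 2 * α) / (β - α)) *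
        ∫ x in {x : ℝ | Γ < |x|},
          (a * |x| ^ (1 + 2 * α - β) + b * u ^ α * |x| ^ (1 + α))⁻¹)
      (𝓝[>] 0)
      (𝓝 (∫ z : ℝ, (a * |z| ^ (1 + 2 * α - β) + b * |z| ^ (1 + α))⁻¹)) := by
  have hint : Integrable (fun z : ℝ => (a * |z| ^ (1 + 2 * α - β) + b * |z| ^ (1 + α))⁻¹) :=
    integrable_aux' hα hβ ha hb
  refine ⟨hint, ?_⟩
  have hba : (0:ℝ) < β - α := by linarith
  set p := 1 + 2 * α - β with hp
  set q := 1 + α with hq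
  set c := α / (β - α) with hc
  set E := α * (β - 2 * α) / (β - α) with hE
  set f : ℝ → ℝ := fun z => (a * |z| ^ p + b * |z| ^ q)⁻¹ with hfdef
  have hc_pos : 0 < c := div_pos hα hba
  -- continuity of the primitive
  have hH : Continuous fun t : ℝ => ∫ z in (0:ℝ)..t, f z :=
    hint.continuous_primitive 0
  have hφ : Tendsto (fun t : ℝ => (∫ z, f z) - ∫ z in (-t)..t, f z) (𝓝 0)
      (𝓝 (∫ z, f z)) := by
    have hpt : ∀ t : ℝ, ∫ z in (-t)..t, f z
        = (∫ z in (0:ℝ)..t, f z) - ∫ z in (0:ℝ)..(-t), f z := fun t =>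
      (intervalIntegral.integral_interval_sub_left hint.intervalIntegrable
        hint.intervalIntegrable).symm
    have h1 : Tendsto (fun t : ℝ => ∫ z in (-t)..t, f z) (𝓝 0) (𝓝 0) := by
      simp only [hpt]
      have hneg : Tendsto (fun a : ℝ => -a) (𝓝 0) (𝓝 0) := by
        simpa using continuous_neg.tendsto (0:ℝ)
      have h2 := (hH.tendsto 0).sub ((hH.tendsto 0).comp hneg)
      simpa using h2
    simpa using tendsto_const_nhds.sub h1
  have hmap : Tendsto (fun u : ℝ => Γ * u ^ c) (𝓝[>] 0) (𝓝 0) := by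
    have h0 : Tendsto (fun u : ℝ => u ^ c) (𝓝 0) (𝓝 0) := by
      have h := (Real.continuousAt_rpow_const 0 c (Or.inr hc_pos.le)).tendsto
      simpa [Real.zero_rpow hc_pos.ne'] using h
    have h1 := h0.const_mul Γ
    simpa using h1.mono_left nhdsWithin_le_nhds
  have hcomp := hφ.comp hmap
  apply Tendsto.congr' _ hcomp
  filter_upwards [self_mem_nhdsWithin] with u hu
  simp only [Function.comp]
  have hu : (0:ℝ) < u := hu
  set s := u ^ c with hsdef
  have hs : 0 < s := Real.rpow_pos_of_pos hu c
  set t := Γ * s with ht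
  have htpos : 0 < t := mul_pos hΓ hs
  -- Step A-C: (∫ f) - ∫_{-t}^t f = ∫_{ {x | t < |x|} } f
  have hAC : (∫ z, f z) - ∫ z in (-t)..t, f z = ∫ x in {x : ℝ | t < |x|}, f x := by
    have hA : ∫ z in (-t)..t, f z = ∫ z in Icc (-t) t, f z := by
      rw [intervalIntegral.integral_of_le (by linarith : -t ≤ t),
        ← integral_Icc_eq_integral_Ioc]
    have hsetc : (Icc (-t) t)ᶜ = {x : ℝ | t < |x|} := by
      ext x
      simp only [mem_compl_iff, mem_Icc, mem_setOf_eq, ← abs_le, not_le]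
    have hB := integral_add_compl (s := Icc (-t) t) measurableSet_Icc hint
    rw [hA, ← hsetc]
    linarith [hB]
  rw [hAC]
  -- Step D: scaling
  have hsmul : s • {x : ℝ | Γ < |x|} = {x : ℝ | t < |x|} := by
    ext y
    rw [mem_smul_set_iff_inv_smul_mem₀ hs.ne']
    simp only [mem_setOf_eq, smul_eq_mul]
    rw [show |s⁻¹ * y| = s⁻¹ * |y| by rw [abs_mul, abs_of_pos (inv_pos.mpr hs)],
      lt_inv_mul_iff₀ hs, ht, mul_comm Γ s]
  have hcv := Measure.setIntegral_comp_smul_of_pos volume f {x : ℝ | Γ < |x|} hs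
  rw [Module.finrank_self, pow_one, hsmul] at hcv
  -- pointwise identity
  have hpw : ∀ x : ℝ, f (s • x) = (s ^ p)⁻¹ * (a * |x| ^ p + b * u ^ α * |x| ^ q)⁻¹ := by
    intro x
    have h1 : |s • x| = s * |x| := by rw [smul_eq_mul, abs_mul, abs_of_pos hs]
    have h2 : (s * |x|) ^ p = s ^ p * |x| ^ p := Real.mul_rpow hs.le (abs_nonneg x)
    have h3 : (s * |x|) ^ q = s ^ q * |x| ^ q := Real.mul_rpow hs.le (abs_nonneg x)
    have h4 : s ^ q = s ^ p * u ^ α := by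
      rw [hsdef, ← Real.rpow_mul hu.le, ← Real.rpow_mul hu.le, ← Real.rpow_add hu]
      congr 1
      rw [hc, hp, hq]
      field_simp
      ring
    simp only [hfdef, h1, h2, h3, h4]
    rw [← mul_inv]
    congr 1
    ring
  have hsc : s * (s ^ p)⁻¹ = u ^ E := by
    rw [hsdef, ← Real.rpow_mul hu.le, ← Real.rpow_neg hu.le, ← Real.rpow_add hu]
    congr 1
    rw [hc, hE, hp]
    field_simp
    ring
  calc ∫ x in {x : ℝ | t < |x|}, f x
      = s • ∫ x in {x : ℝ | Γ < |x|}, f (s • x) := by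
        rw [hcv, smul_smul, mul_inv_cancel₀ hs.ne', one_smul]
    _ = s • ∫ x in {x : ℝ | Γ < |x|},
          (s ^ p)⁻¹ * (a * |x| ^ p + b * u ^ α * |x| ^ q)⁻¹ := by
        simp only [hpw]
    _ = s * ((s ^ p)⁻¹ * ∫ x in {x : ℝ | Γ < |x|},
          (a * |x| ^ p + b * u ^ α * |x| ^ q)⁻¹) := by
        rw [integral_const_mul, smul_eq_mul]
    _ = u ^ E * ∫ x in {x : ℝ | Γ < |x|},
          (a * |x| ^ p + b * u ^ α * |x| ^ q)⁻¹ := by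
        rw [← mul_assoc, hsc]
end

section
/- Let b > 0, α > 0 and Γ > 0. Then lim_{u→0⁺} u^α · (log(1/u))^{α/2} · ∫_Γ^∞ dx / ( x^{1+α} · ( x^{1+α}·e^{−x²/2}/√(2π) + b·u^α ) ) = 1 / ( α·b·(2α)^{α/2} ). -/
open MeasureTheory Filter Topology
open Set

lemma gauss_bound {α η x : ℝ} (hα : 0 < α) (hη : 0 < η) (hx : 0 ≤ x) :
    x ^ (1 + α) * Real.exp (-(η * x ^ 2) / 2) ≤ Real.exp ((1 + α) ^ 2 / (2 * η)) := by
  rcases le_or_gt x 1 with h1 | h1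
  · have hx1 : x ^ (1 + α) ≤ 1 := Real.rpow_le_one hx h1 (by positivity)
    have he : Real.exp (-(η * x ^ 2) / 2) ≤ 1 := by
      rw [Real.exp_le_one_iff]
      have : 0 ≤ η * x ^ 2 := by positivity
      linarith
    calc x ^ (1 + α) * Real.exp (-(η * x ^ 2) / 2) ≤ 1 * 1 :=
          mul_le_mul hx1 he (Real.exp_nonneg _) zero_le_one
      _ = 1 := one_mul 1
      _ ≤ Real.exp ((1 + α) ^ 2 / (2 * η)) := Real.one_le_exp (by positivity)
  · have hx0 : 0 < x := lt_trans one_pos h1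
    have hlog : Real.log x ≤ x := (Real.log_le_sub_one_of_pos hx0).trans (by linarith)
    have h2 : x ^ (1 + α) ≤ Real.exp ((1 + α) * x) := by
      rw [Real.rpow_def_of_pos hx0]
      exact Real.exp_le_exp.2 (by nlinarith)
    calc x ^ (1 + α) * Real.exp (-(η * x ^ 2) / 2)
        ≤ Real.exp ((1 + α) * x) * Real.exp (-(η * x ^ 2) / 2) :=
          mul_le_mul_of_nonneg_right h2 (Real.exp_nonneg _)
      _ = Real.exp ((1 + α) * x + -(η * x ^ 2) / 2) := (Real.exp_add _ _).symm
      _ ≤ Real.exp ((1 + α) ^ 2 / (2 * η)) := by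
          apply Real.exp_le_exp.2
          rw [le_div_iff₀ (by positivity : (0:ℝ) < 2 * η)]
          nlinarith [sq_nonneg (η * x - (1 + α))]

lemma int_Ioi_pow {α c : ℝ} (hα : 0 < α) (hc : 0 < c) :
    ∫ x in Set.Ioi c, x ^ (-(1 + α)) = c ^ (-α) / α := by
  rw [integral_Ioi_rpow_of_lt (by linarith) hc, show -(1 + α) + 1 = -α by ring,
    neg_div_neg_eq]

lemma integrable_f {α Γ d : ℝ} (hα : 0 < α) (hΓ : 0 < Γ) (hd : 0 < d) :
    IntegrableOn (fun x : ℝ =>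
      (x ^ (1 + α) * (x ^ (1 + α) * Real.exp (-x ^ 2 / 2) / Real.sqrt (2 * Real.pi) + d))⁻¹)
      (Set.Ioi Γ) := by
  have hrp : ContinuousOn (fun x : ℝ => x ^ (1 + α)) (Set.Ioi Γ) := fun x hx =>
    (Real.continuousAt_rpow_const x _ (Or.inl (ne_of_gt (hΓ.trans hx)))).continuousWithinAt
  have hcont : ContinuousOn (fun x : ℝ =>
      (x ^ (1 + α) * (x ^ (1 + α) * Real.exp (-x ^ 2 / 2) / Real.sqrt (2 * Real.pi) + d))⁻¹)
      (Set.Ioi Γ) := by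
    apply ContinuousOn.inv₀
    · exact hrp.mul (((hrp.mul (Real.continuous_exp.comp (by continuity)).continuousOn).div_const
        _).add continuousOn_const)
    · intro x hx
      have hx0 : 0 < x := hΓ.trans hx
      have h1 : 0 < x ^ (1 + α) := Real.rpow_pos_of_pos hx0 _
      have hg : 0 ≤ x ^ (1 + α) * Real.exp (-x ^ 2 / 2) / Real.sqrt (2 * Real.pi) :=
        div_nonneg (mul_nonneg h1.le (Real.exp_nonneg _)) (Real.sqrt_nonneg _)
      exact ne_of_gt (mul_pos h1 (by linarith))
  apply Integrable.mono'
    ((integrableOn_Ioi_rpow_of_lt (show -(1 + α) < -1 by linarith) hΓ).const_mul d⁻¹)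
    (hcont.aestronglyMeasurable measurableSet_Ioi)
  filter_upwards [ae_restrict_mem measurableSet_Ioi] with x hx
  have hx0 : 0 < x := hΓ.trans hx
  have h1 : 0 < x ^ (1 + α) := Real.rpow_pos_of_pos hx0 _
  have hg : 0 ≤ x ^ (1 + α) * Real.exp (-x ^ 2 / 2) / Real.sqrt (2 * Real.pi) :=
    div_nonneg (mul_nonneg h1.le (Real.exp_nonneg _)) (Real.sqrt_nonneg _)
  have hfx : 0 ≤ (x ^ (1 + α) * (x ^ (1 + α) * Real.exp (-x ^ 2 / 2) / Real.sqrt (2 * Real.pi)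
      + d))⁻¹ := inv_nonneg.2 (mul_nonneg h1.le (by linarith))
  rw [Real.norm_eq_abs, abs_of_nonneg hfx]
  calc (x ^ (1 + α) * (x ^ (1 + α) * Real.exp (-x ^ 2 / 2) / Real.sqrt (2 * Real.pi) + d))⁻¹
      ≤ (x ^ (1 + α) * d)⁻¹ := by
        apply inv_anti₀ (by positivity)
        exact mul_le_mul_of_nonneg_left (by linarith) h1.le
    _ = d⁻¹ * x ^ (-(1 + α)) := by rw [Real.rpow_neg hx0.le]; ring

lemma log_one_div_tendsto : Tendsto (fun u : ℝ => Real.log (1 / u)) (𝓝[>] (0:ℝ)) atTop := by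
  simp only [one_div, Real.log_inv]
  exact tendsto_neg_atBot_atTop.comp Real.tendsto_log_nhdsGT_zero

lemma rpow_tendsto_zero {c : ℝ} (hc : 0 < c) :
    Tendsto (fun u : ℝ => u ^ c) (𝓝[>] (0:ℝ)) (𝓝 0) := by
  have h := (Real.continuousAt_rpow_const 0 c (Or.inr hc.le)).tendsto
  rw [Real.zero_rpow hc.ne'] at h
  exact h.mono_left nhdsWithin_le_nhds

lemma aux_vanish {a : ℝ} (k : ℝ) (ha : 0 < a) :
    Tendsto (fun u : ℝ => u ^ a * Real.log (1 / u) ^ k) (𝓝[>] (0:ℝ)) (𝓝 0) := by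
  have h := (isLittleO_abs_log_rpow_rpow_nhdsGT_zero k (neg_lt_zero.2 ha)).tendsto_div_nhds_zero
  apply Filter.Tendsto.congr' _ h
  filter_upwards [self_mem_nhdsWithin,
    eventually_nhdsWithin_of_eventually_nhds (eventually_lt_nhds one_pos)] with u hu hu1
  have hu0 : (0:ℝ) < u := hu
  have hlog : Real.log u ≤ 0 := Real.log_nonpos hu0.le hu1.le
  rw [one_div, Real.log_inv, abs_of_nonpos hlog, Real.rpow_neg hu0.le, div_inv_eq_mul]
  ring

lemma key_calc {α s L u B : ℝ} (hα : 0 < α) (hs : 0 < s) (hL : 0 < L) (hu : 0 < u)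
    (hB : 0 < B) :
    u ^ α * L ^ (α / 2) * ((B * u ^ α)⁻¹ * (((2 * s * L) ^ ((1:ℝ) / 2)) ^ (-α) / α)) =
      1 / (α * B * (2 * s) ^ (α / 2)) := by
  have h1 : ((2 * s * L) ^ ((1:ℝ) / 2)) ^ (-α) = ((2 * s) ^ (α / 2))⁻¹ * (L ^ (α / 2))⁻¹ := by
    rw [← Real.rpow_mul (by positivity), show (1:ℝ) / 2 * (-α) = -(α / 2) by ring,
      Real.rpow_neg (by positivity), Real.mul_rpow (by positivity) hL.le, mul_inv]
  rw [h1]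
  have hu' : u ^ α ≠ 0 := ne_of_gt (Real.rpow_pos_of_pos hu _)
  have hL' : L ^ (α / 2) ≠ 0 := ne_of_gt (Real.rpow_pos_of_pos hL _)
  have h2s : (2 * s) ^ (α / 2) ≠ 0 := ne_of_gt (Real.rpow_pos_of_pos (by positivity) _)
  field_simp

set_option maxHeartbeats 2000000

/-- Gaussian-crossover asymptotic establishing the case β = 2 of Theorem 5.4 (eq. SS1). -/
theorem stmt_16 (b α Γ : ℝ) (hb : 0 < b) (hα : 0 < α) (hΓ : 0 < Γ) :
    Tendsto (fun u : ℝ => u ^ α * Real.log (1 / u) ^ (α / 2) *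
        ∫ x in Set.Ioi Γ,
          (x ^ (1 + α) *
            (x ^ (1 + α) * Real.exp (-x ^ 2 / 2) / Real.sqrt (2 * Real.pi) + b * u ^ α))⁻¹)
      (𝓝[>] 0) (𝓝 (1 / (α * b * (2 * α) ^ (α / 2)))) := by
  have hsqrt1 : 1 ≤ Real.sqrt (2 * Real.pi) := by
    rw [show (1:ℝ) = Real.sqrt 1 from Real.sqrt_one.symm]
    exact Real.sqrt_le_sqrt (by nlinarith [Real.pi_gt_three])
  have hsqrt0 : 0 < Real.sqrt (2 * Real.pi) := lt_of_lt_of_le one_pos hsqrt1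
  haveI hNB : (𝓝[>] (0:ℝ)).NeBot := nhdsGT_neBot 0
  refine tendsto_order.2 ⟨?_, ?_⟩
  · -- lower bound
    intro c hc
    obtain ⟨t, hct, ht⟩ : ∃ t : ℝ, c < 1 / (α * ((1 + t) * b) * (2 * (α + t)) ^ (α / 2))
        ∧ 0 < t := by
      have hcont : ContinuousAt (fun t : ℝ =>
          1 / (α * ((1 + t) * b) * (2 * (α + t)) ^ (α / 2))) 0 := by
        apply ContinuousAt.div continuousAt_const
        · exact (continuousAt_const.mul ((continuousAt_const.add continuousAt_id).mul
            continuousAt_const)).mul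
            ((continuousAt_const.mul (continuousAt_const.add continuousAt_id)).rpow_const
              (Or.inr (by positivity)))
        · have h2α : (0:ℝ) < 2 * (α + 0) := by norm_num [hα]
          have hrp := Real.rpow_pos_of_pos h2α (α / 2)
          exact ne_of_gt (mul_pos (mul_pos hα (by norm_num [hb])) hrp)
      have h1 := hcont.tendsto
      rw [show α + (0:ℝ) = α by ring, show (1:ℝ) + 0 = 1 by ring, one_mul] at h1
      obtain ⟨t, h1t, h2t⟩ := (((h1.eventually (eventually_gt_nhds hc)).filter_mono
        nhdsWithin_le_nhds).and (eventually_mem_nhdsWithin (a := (0:ℝ)) (s := Set.Ioi 0))).exists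
      exact ⟨t, h1t, h2t⟩
    set s : ℝ := α + t with hs_def
    have hs : 0 < s := by rw [hs_def]; positivity
    set η : ℝ := t / (2 * s) with hη_def
    have hη : 0 < η := by rw [hη_def]; positivity
    have hη1 : η < 1 := by
      rw [hη_def, div_lt_one (by positivity)]
      rw [hs_def]; linarith
    set M : ℝ := Real.exp ((1 + α) ^ 2 / (2 * η)) with hM_def
    have hM : 0 < M := by rw [hM_def]; exact Real.exp_pos _
    clear_value s η M
    have E2 : ∀ᶠ u : ℝ in 𝓝[>] 0, Γ ^ 2 / (2 * s) ≤ Real.log (1 / u) :=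
      log_one_div_tendsto.eventually (eventually_ge_atTop _)
    have E4 : ∀ᶠ u : ℝ in 𝓝[>] 0, M * u ^ ((s - α) / 2) < t * b := by
      have h0 : Tendsto (fun u : ℝ => M * u ^ ((s - α) / 2)) (𝓝[>] 0) (𝓝 (M * 0)) :=
        (rpow_tendsto_zero (by rw [hs_def]; linarith)).const_mul M
      rw [mul_zero] at h0
      exact h0.eventually (eventually_lt_nhds (by positivity))
    filter_upwards [self_mem_nhdsWithin,
      eventually_nhdsWithin_of_eventually_nhds (eventually_lt_nhds one_pos), E2, E4]
      with u hu hu1 hu2 hu4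
    have hu0 : (0:ℝ) < u := hu
    set L : ℝ := Real.log (1 / u) with hL_def
    clear_value L
    have hL0 : 0 < L := by
      rw [hL_def]; exact Real.log_pos (by rw [lt_div_iff₀ hu0]; linarith)
    set H : ℝ := (2 * s * L) ^ ((1:ℝ) / 2) with hH_def
    clear_value H
    have h2sL : (0:ℝ) < 2 * s * L := by positivity
    have hH2 : H ^ (2:ℕ) = 2 * s * L := by
      rw [hH_def, ← Real.rpow_natCast ((2 * s * L) ^ ((1:ℝ)/2)) 2, ← Real.rpow_mul h2sL.le]
      norm_num
    have hΓ2sL : Γ ^ 2 ≤ 2 * s * L := by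
      have := (div_le_iff₀ (by positivity : (0:ℝ) < 2 * s)).1 hu2
      linarith
    have hΓH : Γ ≤ H := by
      have e1 : ((Γ:ℝ) ^ (2:ℕ)) ^ ((1:ℝ) / 2) = Γ := by
        rw [← Real.rpow_natCast Γ 2, ← Real.rpow_mul hΓ.le]; norm_num
      calc Γ = ((Γ:ℝ) ^ (2:ℕ)) ^ ((1:ℝ) / 2) := e1.symm
        _ ≤ H := by rw [hH_def]; exact Real.rpow_le_rpow (by positivity) hΓ2sL (by norm_num)
    have hH0 : 0 < H := lt_of_lt_of_le hΓ hΓH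
    have hbu : 0 < b * u ^ α := mul_pos hb (Real.rpow_pos_of_pos hu0 _)
    -- pointwise bound for the Gaussian term beyond H
    have hgle : ∀ x : ℝ, H ≤ x →
        x ^ (1 + α) * Real.exp (-x ^ 2 / 2) / Real.sqrt (2 * Real.pi) ≤ t * (b * u ^ α) := by
      intro x hx
      have hx0 : 0 ≤ x := hH0.le.trans hx
      have hsplit : Real.exp (-x ^ 2 / 2)
          = Real.exp (-(η * x ^ 2) / 2) * Real.exp (-((1 - η) * x ^ 2) / 2) := by
        rw [← Real.exp_add]; congr 1; ring
      have b1 : x ^ (1 + α) * Real.exp (-(η * x ^ 2) / 2) ≤ M := by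
        rw [hM_def]; exact gauss_bound hα hη hx0
      have hx2 : 2 * s * L ≤ x ^ 2 := by rw [← hH2]; exact pow_le_pow_left₀ hH0.le hx 2
      have b2 : Real.exp (-((1 - η) * x ^ 2) / 2)
          ≤ Real.exp (-((1 - η) * (2 * s * L)) / 2) := by
        apply Real.exp_le_exp.2
        have h1η : 0 ≤ 1 - η := by linarith
        have := mul_le_mul_of_nonneg_left hx2 h1η
        linarith
      have hη_eq : (1 - η) * s = (s + α) / 2 := by
        rw [hη_def]; field_simp; rw [hs_def]; ring
      have hLu : Real.log u = -L := by rw [hL_def, one_div, Real.log_inv, neg_neg]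
      have b3 : Real.exp (-((1 - η) * (2 * s * L)) / 2) = u ^ ((s + α) / 2) := by
        rw [Real.rpow_def_of_pos hu0, hLu]
        congr 1
        calc -((1 - η) * (2 * s * L)) / 2 = -(((1 - η) * s) * L) := by ring
          _ = -((s + α) / 2 * L) := by rw [hη_eq]
          _ = -L * ((s + α) / 2) := by ring
      have b4 : u ^ ((s + α) / 2) = u ^ ((s - α) / 2) * u ^ α := by
        rw [← Real.rpow_add hu0]; congr 1; ring
      calc x ^ (1 + α) * Real.exp (-x ^ 2 / 2) / Real.sqrt (2 * Real.pi)
          ≤ x ^ (1 + α) * Real.exp (-x ^ 2 / 2) :=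
            div_le_self (mul_nonneg (Real.rpow_nonneg hx0 _) (Real.exp_nonneg _)) hsqrt1
        _ = (x ^ (1 + α) * Real.exp (-(η * x ^ 2) / 2)) * Real.exp (-((1 - η) * x ^ 2) / 2) := by
            rw [hsplit]; ring
        _ ≤ M * u ^ ((s + α) / 2) :=
            mul_le_mul b1 (b2.trans_eq b3) (Real.exp_nonneg _) hM.le
        _ = (M * u ^ ((s - α) / 2)) * u ^ α := by rw [b4]; ring
        _ ≤ (t * b) * u ^ α :=
            mul_le_mul_of_nonneg_right hu4.le (Real.rpow_nonneg hu0.le _)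
        _ = t * (b * u ^ α) := by ring
    set f : ℝ → ℝ := fun x =>
      (x ^ (1 + α) *
        (x ^ (1 + α) * Real.exp (-x ^ 2 / 2) / Real.sqrt (2 * Real.pi) + b * u ^ α))⁻¹
      with hf_def
    have hfint : IntegrableOn f (Set.Ioi Γ) := integrable_f hα hΓ hbu
    clear_value f
    have hf_nonneg : 0 ≤ᵐ[volume.restrict (Set.Ioi Γ)] f := by
      filter_upwards [ae_restrict_mem measurableSet_Ioi] with x hx
      have hx0 : 0 < x := hΓ.trans hx
      have h1 : 0 < x ^ (1 + α) := Real.rpow_pos_of_pos hx0 _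
      have hg : 0 ≤ x ^ (1 + α) * Real.exp (-x ^ 2 / 2) / Real.sqrt (2 * Real.pi) :=
        div_nonneg (mul_nonneg h1.le (Real.exp_nonneg _)) (Real.sqrt_nonneg _)
      simp only [hf_def]
      exact inv_nonneg.2 (mul_nonneg h1.le (by linarith))
    have hstep1 : (∫ x in Set.Ioi H, f x) ≤ ∫ x in Set.Ioi Γ, f x :=
      setIntegral_mono_set hfint hf_nonneg (HasSubset.Subset.eventuallyLE (Set.Ioi_subset_Ioi hΓH))
    have hstep2 : (∫ x in Set.Ioi H, ((1 + t) * b * u ^ α)⁻¹ * x ^ (-(1 + α)))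
        ≤ ∫ x in Set.Ioi H, f x := by
      apply setIntegral_mono_on
        ((integrableOn_Ioi_rpow_of_lt (by linarith) hH0).const_mul _)
        (hfint.mono_set (Set.Ioi_subset_Ioi hΓH)) measurableSet_Ioi
      intro x hx
      have hx0 : 0 < x := hH0.trans hx
      have h1 : 0 < x ^ (1 + α) := Real.rpow_pos_of_pos hx0 _
      have hgb := hgle x (le_of_lt hx)
      have hd : x ^ (1 + α) *
            (x ^ (1 + α) * Real.exp (-x ^ 2 / 2) / Real.sqrt (2 * Real.pi) + b * u ^ α)
          ≤ x ^ (1 + α) * ((1 + t) * b * u ^ α) := by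
        apply mul_le_mul_of_nonneg_left _ h1.le
        nlinarith
      calc ((1 + t) * b * u ^ α)⁻¹ * x ^ (-(1 + α))
          = (x ^ (1 + α) * ((1 + t) * b * u ^ α))⁻¹ := by
            conv_rhs => rw [mul_inv_rev]
            rw [Real.rpow_neg hx0.le]
        _ ≤ f x := by
            simp only [hf_def]
            exact inv_anti₀ (by positivity) hd
    have hstep3 : (∫ x in Set.Ioi H, ((1 + t) * b * u ^ α)⁻¹ * x ^ (-(1 + α)))
        = ((1 + t) * b * u ^ α)⁻¹ * (H ^ (-α) / α) := by
      rw [integral_const_mul, int_Ioi_pow hα hH0]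
    have hpos : 0 ≤ u ^ α * L ^ (α / 2) :=
      mul_nonneg (Real.rpow_nonneg hu0.le _) (Real.rpow_nonneg hL0.le _)
    have hkey := key_calc (B := (1 + t) * b) hα hs hL0 hu0 (mul_pos (by linarith) hb)
    calc c < 1 / (α * ((1 + t) * b) * (2 * s) ^ (α / 2)) := hct
      _ = u ^ α * L ^ (α / 2) * (((1 + t) * b * u ^ α)⁻¹ * (H ^ (-α) / α)) := by
          rw [hH_def]; exact hkey.symm
      _ ≤ u ^ α * L ^ (α / 2) * ∫ x in Set.Ioi H, f x := by
          rw [← hstep3]; exact mul_le_mul_of_nonneg_left hstep2 hpos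
      _ ≤ u ^ α * L ^ (α / 2) * ∫ x in Set.Ioi Γ, f x :=
          mul_le_mul_of_nonneg_left hstep1 hpos
  · -- upper bound
    intro c hc
    obtain ⟨ε, ⟨hcε, hεα⟩, hε⟩ : ∃ ε : ℝ, (1 / (α * b * (2 * (α - ε)) ^ (α / 2)) < c
        ∧ ε < α) ∧ 0 < ε := by
      have hcont : ContinuousAt (fun e : ℝ => 1 / (α * b * (2 * (α - e)) ^ (α / 2))) 0 := by
        apply ContinuousAt.div continuousAt_const
        · exact continuousAt_const.mul
            ((continuousAt_const.mul (continuousAt_const.sub continuousAt_id)).rpow_const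
              (Or.inr (by positivity)))
        · have h2α : (0:ℝ) < 2 * (α - 0) := by norm_num [hα]
          have hrp := Real.rpow_pos_of_pos h2α (α / 2)
          exact ne_of_gt (mul_pos (mul_pos hα hb) hrp)
      have h1 := hcont.tendsto
      rw [show α - (0:ℝ) = α by ring] at h1
      obtain ⟨e, h1e, h2e⟩ := ((((h1.eventually (eventually_lt_nhds hc)).and
        (eventually_lt_nhds hα)).filter_mono nhdsWithin_le_nhds).and
        (eventually_mem_nhdsWithin (a := (0:ℝ)) (s := Set.Ioi 0))).exists
      exact ⟨e, h1e, h2e⟩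
    set s : ℝ := α - ε with hs_def
    clear_value s
    have hs : 0 < s := by rw [hs_def]; linarith
    set T : ℝ := 1 / (α * b * (2 * s) ^ (α / 2)) with hT_def
    clear_value T
    set C0 : ℝ := Real.sqrt (2 * Real.pi) * (Γ ^ (1 + α) * Γ ^ (1 + α))⁻¹ with hC0_def
    clear_value C0
    have hΓ1 : 0 < Γ ^ (1 + α) := Real.rpow_pos_of_pos hΓ _
    have hC0 : 0 < C0 := by
      rw [hC0_def]; exact mul_pos hsqrt0 (inv_pos.2 (mul_pos hΓ1 hΓ1))
    have hG : Tendsto (fun u : ℝ => u ^ α * Real.log (1 / u) ^ (α / 2) *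
        (C0 * Real.exp (s * Real.log (1 / u)) *
          ((2 * s * Real.log (1 / u)) ^ ((1:ℝ) / 2) - Γ))) (𝓝[>] 0) (𝓝 0) := by
      have hup : Tendsto (fun u : ℝ => (C0 * (2 * s) ^ ((1:ℝ) / 2)) *
          (u ^ ε * Real.log (1 / u) ^ ((α + 1) / 2))) (𝓝[>] 0) (𝓝 0) := by
        have h := (aux_vanish ((α + 1) / 2) hε).const_mul (C0 * (2 * s) ^ ((1:ℝ) / 2))
        rwa [mul_zero] at h
      apply squeeze_zero' _ _ hup
      · filter_upwards [self_mem_nhdsWithin,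
          log_one_div_tendsto.eventually (eventually_ge_atTop (Γ ^ 2 / (2 * s)))]
          with u hu huL
        have hu0 : (0:ℝ) < u := hu
        have hL0' : 0 ≤ Real.log (1 / u) := le_trans (by positivity) huL
        have hHΓ : Γ ≤ (2 * s * Real.log (1 / u)) ^ ((1:ℝ) / 2) := by
          have hΓ2sL : (Γ:ℝ) ^ 2 ≤ 2 * s * Real.log (1 / u) := by
            have := (div_le_iff₀ (by positivity : (0:ℝ) < 2 * s)).1 huL
            linarith
          have e1 : ((Γ:ℝ) ^ (2:ℕ)) ^ ((1:ℝ) / 2) = Γ := by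
            rw [← Real.rpow_natCast Γ 2, ← Real.rpow_mul hΓ.le]; norm_num
          calc Γ = ((Γ:ℝ) ^ (2:ℕ)) ^ ((1:ℝ) / 2) := e1.symm
            _ ≤ _ := Real.rpow_le_rpow (by positivity) hΓ2sL (by norm_num)
        exact mul_nonneg (mul_nonneg (Real.rpow_nonneg hu0.le _) (Real.rpow_nonneg hL0' _))
          (mul_nonneg (mul_nonneg hC0.le (Real.exp_nonneg _)) (sub_nonneg.2 hHΓ))
      · filter_upwards [self_mem_nhdsWithin,
          log_one_div_tendsto.eventually (eventually_gt_atTop 0)] with u hu huL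
        have hu0 : (0:ℝ) < u := hu
        have hL0 : 0 < Real.log (1 / u) := huL
        have hLu : Real.log u = -Real.log (1 / u) := by rw [one_div, Real.log_inv, neg_neg]
        have e1 : u ^ α * Real.exp (s * Real.log (1 / u)) = u ^ ε := by
          rw [Real.rpow_def_of_pos hu0 α, Real.rpow_def_of_pos hu0 ε, ← Real.exp_add]
          congr 1
          rw [hLu, hs_def]; ring
        have e2 : (2 * s * Real.log (1 / u)) ^ ((1:ℝ) / 2)
            = (2 * s) ^ ((1:ℝ) / 2) * Real.log (1 / u) ^ ((1:ℝ) / 2) :=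
          Real.mul_rpow (by positivity) hL0.le
        have e3 : Real.log (1 / u) ^ (α / 2) * Real.log (1 / u) ^ ((1:ℝ) / 2)
            = Real.log (1 / u) ^ ((α + 1) / 2) := by
          rw [← Real.rpow_add hL0]; congr 1; ring
        calc u ^ α * Real.log (1 / u) ^ (α / 2) *
              (C0 * Real.exp (s * Real.log (1 / u)) *
                ((2 * s * Real.log (1 / u)) ^ ((1:ℝ) / 2) - Γ))
            ≤ u ^ α * Real.log (1 / u) ^ (α / 2) *
              (C0 * Real.exp (s * Real.log (1 / u)) *
                ((2 * s * Real.log (1 / u)) ^ ((1:ℝ) / 2))) := by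
              apply mul_le_mul_of_nonneg_left _ (mul_nonneg (Real.rpow_nonneg hu0.le _)
                (Real.rpow_nonneg hL0.le _))
              apply mul_le_mul_of_nonneg_left _ (mul_nonneg hC0.le (Real.exp_nonneg _))
              exact sub_le_self _ hΓ.le
          _ = (C0 * (2 * s) ^ ((1:ℝ) / 2)) *
              (u ^ ε * Real.log (1 / u) ^ ((α + 1) / 2)) := by
              rw [e2, ← e3, ← e1]; ring
    have hGc : ∀ᶠ u : ℝ in 𝓝[>] 0, u ^ α * Real.log (1 / u) ^ (α / 2) *
        (C0 * Real.exp (s * Real.log (1 / u)) *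
          ((2 * s * Real.log (1 / u)) ^ ((1:ℝ) / 2) - Γ)) < c - T :=
      hG.eventually (eventually_lt_nhds (sub_pos.2 hcε))
    filter_upwards [self_mem_nhdsWithin,
      eventually_nhdsWithin_of_eventually_nhds (eventually_lt_nhds one_pos),
      log_one_div_tendsto.eventually (eventually_gt_atTop (Γ ^ 2 / (2 * s))), hGc]
      with u hu hu1 hu2 huG
    have hu0 : (0:ℝ) < u := hu
    set L : ℝ := Real.log (1 / u) with hL_def
    clear_value L
    have hL0 : 0 < L := lt_trans (by positivity) hu2
    set H : ℝ := (2 * s * L) ^ ((1:ℝ) / 2) with hH_def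
    clear_value H
    have h2sL : (0:ℝ) < 2 * s * L := by positivity
    have hH2 : H ^ (2:ℕ) = 2 * s * L := by
      rw [hH_def, ← Real.rpow_natCast ((2 * s * L) ^ ((1:ℝ)/2)) 2, ← Real.rpow_mul h2sL.le]
      norm_num
    have hΓH : Γ < H := by
      have hΓ2sL : Γ ^ 2 < 2 * s * L := by
        have := (div_lt_iff₀ (by positivity : (0:ℝ) < 2 * s)).1 hu2
        linarith
      have e1 : ((Γ:ℝ) ^ (2:ℕ)) ^ ((1:ℝ) / 2) = Γ := by
        rw [← Real.rpow_natCast Γ 2, ← Real.rpow_mul hΓ.le]; norm_num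
      calc Γ = ((Γ:ℝ) ^ (2:ℕ)) ^ ((1:ℝ) / 2) := e1.symm
        _ < H := by rw [hH_def]; exact Real.rpow_lt_rpow (by positivity) hΓ2sL (by norm_num)
    have hH0 : 0 < H := lt_trans hΓ hΓH
    have hbu : 0 < b * u ^ α := mul_pos hb (Real.rpow_pos_of_pos hu0 _)
    set f : ℝ → ℝ := fun x =>
      (x ^ (1 + α) *
        (x ^ (1 + α) * Real.exp (-x ^ 2 / 2) / Real.sqrt (2 * Real.pi) + b * u ^ α))⁻¹
      with hf_def
    have hfint : IntegrableOn f (Set.Ioi Γ) := integrable_f hα hΓ hbu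
    clear_value f
    have hf1 : IntegrableOn f (Set.Ioc Γ H) := hfint.mono_set Set.Ioc_subset_Ioi_self
    have hf2 : IntegrableOn f (Set.Ioi H) := hfint.mono_set (Set.Ioi_subset_Ioi hΓH.le)
    have hsplit : (∫ x in Set.Ioi Γ, f x)
        = (∫ x in Set.Ioc Γ H, f x) + ∫ x in Set.Ioi H, f x := by
      rw [← setIntegral_union (Set.Ioc_disjoint_Ioi le_rfl) measurableSet_Ioi hf1 hf2,
        Set.Ioc_union_Ioi_eq_Ioi hΓH.le]
    have hC : ∀ x ∈ Set.Ioc Γ H, ‖f x‖ ≤ C0 * Real.exp (s * L) := by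
      intro x hx
      have hx0 : 0 < x := hΓ.trans hx.1
      have h1 : 0 < x ^ (1 + α) := Real.rpow_pos_of_pos hx0 _
      have hgx : 0 ≤ x ^ (1 + α) * Real.exp (-x ^ 2 / 2) / Real.sqrt (2 * Real.pi) :=
        div_nonneg (mul_nonneg h1.le (Real.exp_nonneg _)) (Real.sqrt_nonneg _)
      have hfx0 : 0 ≤ f x := by
        simp only [hf_def]
        exact inv_nonneg.2 (mul_nonneg h1.le (by linarith))
      have hxa : Γ ^ (1 + α) ≤ x ^ (1 + α) := Real.rpow_le_rpow hΓ.le hx.1.le (by positivity)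
      have hmono : Γ ^ (1 + α) * (Γ ^ (1 + α) * Real.exp (-x ^ 2 / 2) / Real.sqrt (2 * Real.pi))
          ≤ x ^ (1 + α) *
            (x ^ (1 + α) * Real.exp (-x ^ 2 / 2) / Real.sqrt (2 * Real.pi) + b * u ^ α) := by
        have hbb : Γ ^ (1 + α) * Real.exp (-x ^ 2 / 2) / Real.sqrt (2 * Real.pi)
            ≤ x ^ (1 + α) * Real.exp (-x ^ 2 / 2) / Real.sqrt (2 * Real.pi) + b * u ^ α := by
          have h' : Γ ^ (1 + α) * Real.exp (-x ^ 2 / 2) / Real.sqrt (2 * Real.pi)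
              ≤ x ^ (1 + α) * Real.exp (-x ^ 2 / 2) / Real.sqrt (2 * Real.pi) := by
            gcongr
          linarith
        exact mul_le_mul hxa hbb
          (div_nonneg (mul_nonneg hΓ1.le (Real.exp_nonneg _)) (Real.sqrt_nonneg _)) h1.le
      have hΓprodpos : 0 < Γ ^ (1 + α) *
          (Γ ^ (1 + α) * Real.exp (-x ^ 2 / 2) / Real.sqrt (2 * Real.pi)) :=
        mul_pos hΓ1 (div_pos (mul_pos hΓ1 (Real.exp_pos _)) hsqrt0)
      have hinv : f x ≤ (Γ ^ (1 + α) *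
          (Γ ^ (1 + α) * Real.exp (-x ^ 2 / 2) / Real.sqrt (2 * Real.pi)))⁻¹ := by
        simp only [hf_def]
        exact inv_anti₀ hΓprodpos hmono
      have heq : (Γ ^ (1 + α) *
          (Γ ^ (1 + α) * Real.exp (-x ^ 2 / 2) / Real.sqrt (2 * Real.pi)))⁻¹
          = C0 * Real.exp (x ^ 2 / 2) := by
        rw [hC0_def, neg_div, Real.exp_neg]
        field_simp
      have hxH : x ^ 2 / 2 ≤ s * L := by
        have hx2 : x ^ (2:ℕ) ≤ H ^ (2:ℕ) := pow_le_pow_left₀ hx0.le hx.2 2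
        rw [hH2] at hx2; nlinarith
      calc ‖f x‖ = f x := by rw [Real.norm_eq_abs, abs_of_nonneg hfx0]
        _ ≤ C0 * Real.exp (x ^ 2 / 2) := hinv.trans_eq heq
        _ ≤ C0 * Real.exp (s * L) :=
            mul_le_mul_of_nonneg_left (Real.exp_le_exp.2 hxH) hC0.le
    have hIoc : (∫ x in Set.Ioc Γ H, f x) ≤ C0 * Real.exp (s * L) * (H - Γ) := by
      have h := norm_setIntegral_le_of_norm_le_const
        (measure_Ioc_lt_top : volume (Set.Ioc Γ H) < ⊤) hC
      have hvol : (volume (Set.Ioc Γ H)).toReal = H - Γ := by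
        rw [Real.volume_Ioc, ENNReal.toReal_ofReal (by linarith)]
      calc (∫ x in Set.Ioc Γ H, f x) ≤ ‖∫ x in Set.Ioc Γ H, f x‖ := by
            rw [Real.norm_eq_abs]; exact le_abs_self _
        _ ≤ C0 * Real.exp (s * L) * (volume (Set.Ioc Γ H)).toReal := h
        _ = C0 * Real.exp (s * L) * (H - Γ) := by rw [hvol]
    have hIoi : (∫ x in Set.Ioi H, f x) ≤ (b * u ^ α)⁻¹ * (H ^ (-α) / α) := by
      have hmon : (∫ x in Set.Ioi H, f x)
          ≤ ∫ x in Set.Ioi H, (b * u ^ α)⁻¹ * x ^ (-(1 + α)) := by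
        apply setIntegral_mono_on hf2
          ((integrableOn_Ioi_rpow_of_lt (by linarith) hH0).const_mul _) measurableSet_Ioi
        intro x hx
        have hx0 : 0 < x := hH0.trans hx
        have h1 : 0 < x ^ (1 + α) := Real.rpow_pos_of_pos hx0 _
        have hgx : 0 ≤ x ^ (1 + α) * Real.exp (-x ^ 2 / 2) / Real.sqrt (2 * Real.pi) :=
          div_nonneg (mul_nonneg h1.le (Real.exp_nonneg _)) (Real.sqrt_nonneg _)
        calc f x ≤ (x ^ (1 + α) * (b * u ^ α))⁻¹ := by
              simp only [hf_def]
              exact inv_anti₀ (mul_pos h1 hbu)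
                (mul_le_mul_of_nonneg_left (by linarith) h1.le)
          _ = (b * u ^ α)⁻¹ * x ^ (-(1 + α)) := by
              conv_lhs => rw [mul_inv_rev]
              rw [Real.rpow_neg hx0.le]
      rwa [integral_const_mul, int_Ioi_pow hα hH0] at hmon
    have hpos : 0 ≤ u ^ α * L ^ (α / 2) :=
      mul_nonneg (Real.rpow_nonneg hu0.le _) (Real.rpow_nonneg hL0.le _)
    have hkey := key_calc (B := b) hα hs hL0 hu0 hb
    calc u ^ α * L ^ (α / 2) * ∫ x in Set.Ioi Γ, f x
        = u ^ α * L ^ (α / 2) * ((∫ x in Set.Ioc Γ H, f x) + ∫ x in Set.Ioi H, f x) := by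
          rw [hsplit]
      _ ≤ u ^ α * L ^ (α / 2) *
          ((C0 * Real.exp (s * L) * (H - Γ)) + (b * u ^ α)⁻¹ * (H ^ (-α) / α)) :=
          mul_le_mul_of_nonneg_left (add_le_add hIoc hIoi) hpos
      _ = u ^ α * L ^ (α / 2) * (C0 * Real.exp (s * L) * (H - Γ))
          + u ^ α * L ^ (α / 2) * ((b * u ^ α)⁻¹ * (H ^ (-α) / α)) := by ring
      _ = u ^ α * L ^ (α / 2) * (C0 * Real.exp (s * L) * (H - Γ)) + T := by
          rw [hH_def, hkey, hT_def]
      _ < (c - T) + T := by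
          apply add_lt_add_of_lt_of_le _ le_rfl
          exact huG
      _ = c := by ring
end
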